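/- arXiv:1212.1883 — 6 statements merged into one kernel-verified Lean document; each statement's English description precedes it below -/
import Mathlib

section
/- Every tournament with an arbitrary arc-weighting contains a weakly expanding (Seymour) vertex, i.e., there exists a vertex v with δ_v = β_v − α_v ≥ 0. -/
open Finset

/-- The first out-neighborhood of `v`: all `u` with `v → u`. -/
def firstNbhd {V : Type*} [Fintype V] (adj : V → V → Prop) [DecidableRel adj] (v : V) :
    Finset V :=
  Finset.univ.filter (fun u => adj v u)

/-- The second out-neighborhood of `v`: all `u ≠ v` with `¬ v → u` and `v → x → u` for some `x`. -/
def secondNbhd {V : Type*} [Fintype V] [DecidableEq V] (adj : V → V → Prop)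
    [DecidableRel adj] (v : V) : Finset V :=
  Finset.univ.filter (fun u => u ≠ v ∧ ¬ adj v u ∧ ∃ x, adj v x ∧ adj x u)

/-- First neighborhood weight `α_v = Σ_{u ∈ N1+(v)} w(vu)`. -/
def alphaW {V : Type*} [Fintype V] (adj : V → V → Prop) [DecidableRel adj]
    (w : V → V → ℝ) (v : V) : ℝ :=
  ∑ u ∈ firstNbhd adj v, w v u

/-- `β_v(s) = max({0} ∪ {w(us) − w(vs) : v → u and u → s})`. -/
noncomputable def betaS {V : Type*} [Fintype V] (adj : V → V → Prop) [DecidableRel adj]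
    (w : V → V → ℝ) (v s : V) : ℝ :=
  (insert (0 : ℝ)
    ((Finset.univ.filter (fun u => adj v u ∧ adj u s)).image (fun u => w u s - w v s))).max'
    (Finset.insert_nonempty _ _)

/-- Second neighborhood weight `β_v = Σ_{s ∈ V} β_v(s)`. -/
noncomputable def betaW {V : Type*} [Fintype V] (adj : V → V → Prop) [DecidableRel adj]
    (w : V → V → ℝ) (v : V) : ℝ :=
  ∑ s, betaS adj w v s

/-- Neighborhood weight difference `δ_v = β_v − α_v`. -/
noncomputable def deltaW {V : Type*} [Fintype V] (adj : V → V → Prop) [DecidableRel adj]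
    (w : V → V → ℝ) (v : V) : ℝ :=
  betaW adj w v - alphaW adj w v

section SeymourAux

variable {V : Type*} [Fintype V] [DecidableEq V]

/-- **Lemma A**: every tournament has a "dominant" probability distribution `p`, i.e.
one with `p(N⁻(v)) ≤ p(N⁺(v))` for every vertex `v`. -/
lemma exists_dominant_dist [Nonempty V] (adj : V → V → Prop) [DecidableRel adj]
    (hirr : ∀ v, ¬ adj v v)
    (htour : ∀ u v : V, u ≠ v → (adj u v ↔ ¬ adj v u)) :
    ∃ p : V → ℝ, (∀ v, 0 ≤ p v) ∧ (∑ v, p v = 1) ∧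
      ∀ v, (∑ u ∈ Finset.univ.filter (fun u => adj u v), p u) ≤
        ∑ u ∈ Finset.univ.filter (fun u => adj v u), p u := by
  by_contra hcon
  push_neg at hcon
  -- the skew-symmetric payoff function
  set g : V → V → ℝ := fun v u => (if adj v u then (1 : ℝ) else 0) - (if adj u v then 1 else 0)
    with hg
  have hskew : ∀ v u, g v u = - g u v := by
    intro v u; simp only [hg]; ring
  have hgvu : ∀ (p : V → ℝ) (v : V), (∑ u, p u * g v u) =
      (∑ u ∈ Finset.univ.filter (fun u => adj v u), p u)
        - ∑ u ∈ Finset.univ.filter (fun u => adj u v), p u := by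
    intro p v
    rw [Finset.sum_filter, Finset.sum_filter, ← Finset.sum_sub_distrib]
    refine Finset.sum_congr rfl fun u _ => ?_
    simp only [hg, mul_sub, mul_ite, mul_one, mul_zero]
  -- the linear map p ↦ (v ↦ ∑ u, p u * g v u)
  set L : (V → ℝ) →ₗ[ℝ] (V → ℝ) :=
    { toFun := fun p v => ∑ u, p u * g v u
      map_add' := by
        intro p q; funext v
        simp [add_mul, Finset.sum_add_distrib]
      map_smul' := by
        intro c p; funext v
        simp [Finset.mul_sum, mul_assoc] } with hL
  have hLapp : ∀ (p : V → ℝ) (v : V), L p v = ∑ u, p u * g v u := fun _ _ => rfl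
  set K : Set (V → ℝ) := L '' stdSimplex ℝ V with hK
  set O : Set (V → ℝ) := {f | ∀ v, 0 ≤ f v} with hO
  have hK1 : Convex ℝ K := (convex_stdSimplex ℝ V).linear_image L
  have hK2 : IsCompact K := (isCompact_stdSimplex ℝ V).image L.continuous_of_finiteDimensional
  have hO1 : Convex ℝ O := by
    intro x hx y hy a b ha hb hab v
    exact add_nonneg (mul_nonneg ha (hx v)) (mul_nonneg hb (hy v))
  have hO2 : IsClosed O := by
    have : O = ⋂ v, (fun f : V → ℝ => f v) ⁻¹' Set.Ici (0 : ℝ) := by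
      ext f; simp [hO, Set.mem_iInter]
    rw [this]
    exact isClosed_iInter fun v => (isClosed_Ici).preimage (continuous_apply v)
  have hdisj : Disjoint K O := by
    rw [Set.disjoint_left]
    rintro x ⟨p, hp, rfl⟩ hxO
    obtain ⟨v, hv⟩ := hcon p hp.1 hp.2
    have := hxO v
    rw [hLapp, hgvu] at this
    linarith
  obtain ⟨f, a, b, hfa, hab, hfb⟩ :=
    geometric_hahn_banach_compact_closed hK1 hK2 hO1 hO2 hdisj
  have hb0 : b < 0 := by
    have h0O : (0 : V → ℝ) ∈ O := fun v => le_refl 0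
    have := hfb 0 h0O
    simpa using this
  -- coordinates of f
  set q : V → ℝ := fun v => f (fun j => if v = j then (1 : ℝ) else 0) with hq
  have hq0 : ∀ v, 0 ≤ q v := by
    intro v
    by_contra hneg
    push_neg at hneg
    set t : ℝ := (b - 1) / q v with ht
    have htpos : 0 ≤ t := div_nonneg_of_nonpos (by linarith) hneg.le
    have hyO : (t • fun j => if v = j then (1 : ℝ) else 0) ∈ O := by
      intro j
      simp only [Pi.smul_apply, smul_eq_mul]
      positivity
    have hcalc : f ((t : ℝ) • fun j => if v = j then (1 : ℝ) else 0) = t * q v := by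
      rw [map_smul]; simp [hq, smul_eq_mul]
    have := hfb _ hyO
    rw [hcalc, ht, div_mul_cancel₀ _ (ne_of_lt hneg)] at this
    linarith
  have hfx : ∀ x : V → ℝ, f x = ∑ v, x v * q v := by
    intro x
    conv_lhs => rw [pi_eq_sum_univ x, map_sum]
    refine Finset.sum_congr rfl fun v _ => ?_
    rw [map_smul]
    simp [hq, smul_eq_mul]
  -- the total mass of q is positive
  have hQpos : 0 < ∑ v, q v := by
    rcases lt_or_eq_of_le (Finset.sum_nonneg (fun v _ => hq0 v)) with h | h
    · exact h
    · exfalso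
      have hq00 : ∀ v, q v = 0 := by
        intro v
        have := (Finset.sum_eq_zero_iff_of_nonneg (fun v _ => hq0 v)).1 h.symm
        exact this v (Finset.mem_univ v)
      -- then f vanishes identically, contradicting separation
      obtain ⟨x0, hx0⟩ : K.Nonempty := by
        refine ⟨L (fun _ => (1 : ℝ) / Fintype.card V), ⟨_, ⟨fun v => by positivity, ?_⟩, rfl⟩⟩
        rw [Finset.sum_const, Finset.card_univ, nsmul_eq_mul]
        field_simp
      have h1 : f x0 < a := hfa x0 hx0
      have h2 : f x0 = 0 := by rw [hfx]; simp [hq00]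
      linarith
  set p : V → ℝ := fun v => q v / (∑ u, q u) with hp
  have hpS : p ∈ stdSimplex ℝ V := by
    constructor
    · intro v; exact div_nonneg (hq0 v) hQpos.le
    · rw [← Finset.sum_div]; field_simp
  have hfLp : f (L p) = 0 := by
    rw [hfx]
    have : ∀ v, L p v * q v = (∑ u, (q v * q u * g v u) / (∑ x, q x)) := by
      intro v
      rw [hLapp, Finset.sum_mul]
      refine Finset.sum_congr rfl fun u _ => ?_
      simp only [hp]
      field_simp
    rw [Finset.sum_congr rfl (fun v _ => this v)]
    simp_rw [← Finset.sum_div]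
    have hzero : (∑ v, ∑ u, q v * q u * g v u) = 0 := by
      have hswap : (∑ v, ∑ u, q v * q u * g v u) = ∑ u, ∑ v, q v * q u * g v u :=
        Finset.sum_comm
      have hneg2 : (∑ u, ∑ v, q v * q u * g v u) = - ∑ v, ∑ u, q v * q u * g v u := by
        rw [← Finset.sum_neg_distrib]
        refine Finset.sum_congr rfl fun v _ => ?_
        rw [← Finset.sum_neg_distrib]
        refine Finset.sum_congr rfl fun u _ => ?_
        rw [hskew u v]; ring
      have : (∑ v, ∑ u, q v * q u * g v u) = - ∑ v, ∑ u, q v * q u * g v u := by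
        rw [hswap] at hneg2 ⊢; exact hneg2
      linarith
    rw [hzero, zero_div]
  have := hfa (L p) ⟨p, hpS, rfl⟩
  rw [hfLp] at this
  linarith

end SeymourAux

private lemma exists_expander {V : Type*} [Fintype V] [DecidableEq V] [Nonempty V]
    (adj : V → V → Prop) [DecidableRel adj]
    (hirr : ∀ v, ¬ adj v v)
    (htour : ∀ u v : V, u ≠ v → (adj u v ↔ ¬ adj v u))
    (w : V → V → ℝ)
    (hw_nonneg : ∀ a b, 0 ≤ w a b)
    (hw_arc : ∀ a b, ¬ adj a b → w a b = 0)
    (p : V → ℝ) (hp0 : ∀ v, 0 ≤ p v) (hp1 : ∑ v, p v = 1)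
    (hpdom : ∀ v, (∑ u ∈ Finset.univ.filter (fun u => adj u v), p u) ≤
        ∑ u ∈ Finset.univ.filter (fun u => adj v u), p u) :
    ∃ v : V, 2 * (∑ s, w v s) ≤ ∑ s, (insert v (firstNbhd adj v)).sup'
      (Finset.insert_nonempty _ _) (fun x => w x s) := by
  classical
  -- notation
  set out : V → ℝ := fun v => ∑ u ∈ Finset.univ.filter (fun u => adj v u), p u with hout
  set inn : V → ℝ := fun v => ∑ u ∈ Finset.univ.filter (fun u => adj u v), p u with hinn
  set MX : V → (V → ℝ) → ℝ :=
    fun v ω => (insert v (firstNbhd adj v)).sup' (Finset.insert_nonempty _ _) ω with hMX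
  have hMXle : ∀ (v : V) (ω : V → ℝ) (y : V), y ∈ insert v (firstNbhd adj v) → ω y ≤ MX v ω :=
    fun v ω y hy => Finset.le_sup' ω hy
  have hMXex : ∀ (v : V) (ω : V → ℝ), ∃ y, y ∈ insert v (firstNbhd adj v) ∧ MX v ω = ω y :=
    fun v ω => Finset.exists_mem_eq_sup' _ ω
  have hMXle' : ∀ (v : V) (ω : V → ℝ) (z : ℝ),
      (∀ y ∈ insert v (firstNbhd adj v), ω y ≤ z) → MX v ω ≤ z :=
    fun v ω z h => Finset.sup'_le _ ω h
  -- slack: p v * out v = p v * inn v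
  have htot : ∑ v, p v * out v = ∑ v, p v * inn v := by
    have h1 : ∑ v, p v * out v = ∑ v, ∑ u, (if adj v u then p v * p u else 0) := by
      refine Finset.sum_congr rfl fun v _ => ?_
      simp only [hout, Finset.mul_sum, Finset.sum_filter, mul_ite, mul_zero]
    have h2 : ∑ v, p v * inn v = ∑ v, ∑ u, (if adj u v then p u * p v else 0) := by
      refine Finset.sum_congr rfl fun v _ => ?_
      simp only [hinn, Finset.mul_sum, Finset.sum_filter, mul_ite, mul_zero, mul_comm]
    rw [h1, h2, Finset.sum_comm]
  have hslack : ∀ v, p v * out v = p v * inn v := by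
    have hnn : ∀ v ∈ Finset.univ, 0 ≤ p v * (out v - inn v) :=
      fun v _ => mul_nonneg (hp0 v) (sub_nonneg.2 (hpdom v))
    have hzero : ∑ v, p v * (out v - inn v) = 0 := by
      simp_rw [mul_sub]; rw [Finset.sum_sub_distrib, htot, sub_self]
    intro v
    have := (Finset.sum_eq_zero_iff_of_nonneg hnn).1 hzero v (Finset.mem_univ v)
    nlinarith [this]
  -- Lemma B
  have hlemB : ∀ (s : V) (S : Finset V), (∀ x ∈ S, adj x s) →
      2 * (∑ x ∈ S, p x) ≤
        ∑ v ∈ Finset.univ.filter (fun v => ∃ x ∈ S, x = v ∨ adj v x), p v := by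
    intro s S hSs
    set D : Finset V := Finset.univ.filter (fun v => ∃ x ∈ S, x = v ∨ adj v x) with hD
    have hSD : S ⊆ D := by
      intro x hx
      exact Finset.mem_filter.2 ⟨Finset.mem_univ x, ⟨x, hx, Or.inl rfl⟩⟩
    set R : Finset V := Finset.univ \ D with hR
    set DS : Finset V := D \ S with hDS
    have hRprop : ∀ r ∈ R, ∀ x ∈ S, ¬ adj r x ∧ x ≠ r := by
      intro r hr x hx
      have : r ∉ D := (Finset.mem_sdiff.1 hr).2
      rw [hD, Finset.mem_filter] at this
      push_neg at this
      have h2 := this (Finset.mem_univ r) x hx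
      exact ⟨h2.2, h2.1⟩
    have hxr : ∀ r ∈ R, ∀ x ∈ S, adj x r := by
      intro r hr x hx
      obtain ⟨hnadj, hne⟩ := hRprop r hr x hx
      exact (htour x r hne).2 hnadj
    set F : Finset V → Finset V → ℝ :=
      fun A B => ∑ a ∈ A, ∑ b ∈ B, (if adj a b then p a * p b else 0) with hF
    -- F R univ = F univ R via slack
    have hFeq : F R Finset.univ = F Finset.univ R := by
      have e1 : F R Finset.univ = ∑ r ∈ R, p r * out r := by
        refine Finset.sum_congr rfl fun r _ => ?_
        simp only [hout, Finset.mul_sum, Finset.sum_filter, mul_ite, mul_zero]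
      have e2 : F Finset.univ R = ∑ r ∈ R, p r * inn r := by
        simp only [hF]
        rw [Finset.sum_comm]
        refine Finset.sum_congr rfl fun r _ => ?_
        simp only [hinn, Finset.mul_sum, Finset.sum_filter, mul_ite, mul_zero, mul_comm]
      rw [e1, e2]
      exact Finset.sum_congr rfl fun r _ => hslack r
    -- decompositions
    have hsplitB : ∀ A : Finset V, F A Finset.univ = F A R + F A DS + F A S := by
      intro A
      simp only [hF]
      have : ∀ a : V, (∑ b, (if adj a b then p a * p b else 0)) =
          (∑ b ∈ R, (if adj a b then p a * p b else 0))
          + (∑ b ∈ DS, (if adj a b then p a * p b else 0))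
          + (∑ b ∈ S, (if adj a b then p a * p b else 0)) := by
        intro a
        have h1 : ∑ b ∈ R, (if adj a b then p a * p b else 0)
            + ∑ b ∈ D, (if adj a b then p a * p b else 0)
            = ∑ b, (if adj a b then p a * p b else 0) := Finset.sum_sdiff (Finset.subset_univ D)
        have h2 : ∑ b ∈ DS, (if adj a b then p a * p b else 0)
            + ∑ b ∈ S, (if adj a b then p a * p b else 0)
            = ∑ b ∈ D, (if adj a b then p a * p b else 0) := Finset.sum_sdiff hSD
        linarith
      rw [Finset.sum_congr rfl fun a _ => this a]
      rw [Finset.sum_add_distrib, Finset.sum_add_distrib]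

    have hsplitA : ∀ B : Finset V, F Finset.univ B = F R B + F DS B + F S B := by
      intro B
      have h1 : F R B + F D B = F Finset.univ B := Finset.sum_sdiff (Finset.subset_univ D)
      have h2 : F DS B + F S B = F D B := Finset.sum_sdiff hSD
      linarith
    have hFRS : F R S = 0 := by
      simp only [hF]
      refine Finset.sum_eq_zero fun r hr => Finset.sum_eq_zero fun x hx => ?_
      rw [if_neg (hRprop r hr x hx).1]
    have hFSR : F S R = (∑ x ∈ S, p x) * (∑ r ∈ R, p r) := by
      simp only [hF]
      rw [Finset.sum_mul_sum]
      exact Finset.sum_congr rfl fun x hx => Finset.sum_congr rfl fun r hr =>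
        if_pos (hxr r hr x hx)
    have hFle : F R DS ≤ (∑ r ∈ R, p r) * (∑ y ∈ DS, p y) := by
      simp only [hF]
      rw [Finset.sum_mul_sum]
      refine Finset.sum_le_sum fun r _ => Finset.sum_le_sum fun y _ => ?_
      split
      · exact le_refl _
      · exact mul_nonneg (hp0 r) (hp0 y)
    have hFDSR : 0 ≤ F DS R := by
      simp only [hF]
      refine Finset.sum_nonneg fun a _ => Finset.sum_nonneg fun b _ => ?_
      split
      · exact mul_nonneg (hp0 a) (hp0 b)
      · exact le_refl _
    -- main inequality σρ ≤ ρτ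
    have hkey : (∑ x ∈ S, p x) * (∑ r ∈ R, p r) ≤ (∑ r ∈ R, p r) * (∑ y ∈ DS, p y) := by
      have hA := hsplitB R
      have hB := hsplitA R
      have hRR : F R R = F R R := rfl
      nlinarith [hFeq, hA, hB, hFRS, hFSR, hFle, hFDSR]
    have hρ : 0 ≤ ∑ r ∈ R, p r := Finset.sum_nonneg fun r _ => hp0 r
    have hDsum : ∑ v ∈ D, p v = (∑ x ∈ S, p x) + (∑ y ∈ DS, p y) := by
      have := Finset.sum_sdiff (f := p) hSD
      linarith
    rcases eq_or_lt_of_le hρ with hρ0 | hρpos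
    · -- R has mass zero; use the prey s
      have hmass : (∑ v ∈ D, p v) = 1 := by
        have h5 := Finset.sum_sdiff (f := p) (Finset.subset_univ D)
        rw [← hR] at h5
        rw [← hp1, ← h5, ← hρ0]
        ring
      have hσ : (∑ x ∈ S, p x) ≤ inn s := by
        simp only [hinn]
        refine Finset.sum_le_sum_of_subset_of_nonneg ?_ (fun v _ _ => hp0 v)
        intro x hx
        exact Finset.mem_filter.2 ⟨Finset.mem_univ x, hSs x hx⟩
      have hio : inn s + out s ≤ 1 := by
        simp only [hinn, hout]
        rw [← Finset.sum_union]
        · rw [← hp1]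
          exact Finset.sum_le_sum_of_subset_of_nonneg (Finset.subset_univ _)
            (fun v _ _ => hp0 v)
        · rw [Finset.disjoint_left]
          intro u hu1 hu2
          rw [Finset.mem_filter] at hu1 hu2
          rcases eq_or_ne u s with rfl | hne
          · exact hirr u hu1.2
          · exact ((htour u s hne).1 hu1.2) hu2.2
      have h6 : inn s ≤ out s := hpdom s
      linarith
    · -- positive mass on R
      have : (∑ x ∈ S, p x) ≤ (∑ y ∈ DS, p y) := by
        nlinarith [hkey, hρpos]
      linarith
  -- the per-target induction
  have key : ∀ (n : ℕ) (s : V) (ω : V → ℝ),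
      (Finset.univ.filter fun x => ω x ≠ 0).card ≤ n →
      (∀ x, 0 ≤ ω x) → (∀ x, ω x ≠ 0 → adj x s) →
      2 * (∑ x, p x * ω x) ≤ ∑ v, p v * MX v ω := by
    intro n
    induction n with
    | zero =>
      intro s ω hcard hω0 hωs
      have hall : ∀ x, ω x = 0 := by
        intro x
        by_contra hx
        have : x ∈ Finset.univ.filter fun x => ω x ≠ 0 :=
          Finset.mem_filter.2 ⟨Finset.mem_univ x, hx⟩
        have := Finset.card_pos.2 ⟨x, this⟩
        omega
      have hMX0 : ∀ v, MX v ω = 0 := by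
        intro v
        refine le_antisymm (hMXle' v ω 0 fun y _ => (hall y).le) ?_
        have := hMXle v ω v (Finset.mem_insert_self _ _)
        rw [hall v] at this
        exact this
      simp [hall, hMX0]
    | succ n IH =>
      intro s ω hcard hω0 hωs
      set S : Finset V := Finset.univ.filter fun x => ω x ≠ 0 with hSdef
      rcases Finset.eq_empty_or_nonempty S with hS | hSne
      · have hall : ∀ x, ω x = 0 := by
          intro x
          by_contra hx
          have : x ∈ S := Finset.mem_filter.2 ⟨Finset.mem_univ x, hx⟩
          rw [hS] at this
          exact absurd this (Finset.notMem_empty x)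
        have hMX0 : ∀ v, MX v ω = 0 := by
          intro v
          refine le_antisymm (hMXle' v ω 0 fun y _ => (hall y).le) ?_
          have := hMXle v ω v (Finset.mem_insert_self _ _)
          rw [hall v] at this
          exact this
        simp [hall, hMX0]
      · obtain ⟨x₀, hx₀S, hx₀⟩ := Finset.exists_mem_eq_inf' hSne ω
        set c : ℝ := S.inf' hSne ω with hc
        have hcle : ∀ x ∈ S, c ≤ ω x := fun x hx => Finset.inf'_le ω hx
        have hcpos : 0 < c := by
          rw [hx₀]
          have := (Finset.mem_filter.1 hx₀S).2
          exact lt_of_le_of_ne (hω0 x₀) (Ne.symm this)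
        set ω' : V → ℝ := fun x => if x ∈ S then ω x - c else 0 with hω'
        have hω'0 : ∀ x, 0 ≤ ω' x := by
          intro x
          simp only [hω']
          split
          · next h => linarith [hcle x h]
          · exact le_refl 0
        have hsupp' : (Finset.univ.filter fun x => ω' x ≠ 0) ⊆ S.erase x₀ := by
          intro x hx
          rw [Finset.mem_filter] at hx
          have hx' := hx.2
          simp only [hω'] at hx'
          by_cases hxS : x ∈ S
          · rw [if_pos hxS] at hx'
            refine Finset.mem_erase.2 ⟨?_, hxS⟩
            rintro rfl
            rw [hx₀] at hx'
            simp at hx'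
          · rw [if_neg hxS] at hx'; exact absurd rfl hx'
        have hcard' : (Finset.univ.filter fun x => ω' x ≠ 0).card ≤ n := by
          have h1 := Finset.card_le_card hsupp'
          rw [Finset.card_erase_of_mem hx₀S] at h1
          have h2 : S.card ≤ n + 1 := hcard
          omega
        have hω's : ∀ x, ω' x ≠ 0 → adj x s := by
          intro x hx
          simp only [hω'] at hx
          by_cases hxS : x ∈ S
          · exact hωs x (Finset.mem_filter.1 hxS).2
          · rw [if_neg hxS] at hx; exact absurd rfl hx
        have hIH := IH s ω' hcard' hω'0 hω's
        set D : Finset V := Finset.univ.filter (fun v => ∃ x ∈ S, x = v ∨ adj v x) with hD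
        have hB := hlemB s S (fun x hx => hωs x (Finset.mem_filter.1 hx).2)
        rw [← hD] at hB
        -- pointwise key inequality
        have hpt : ∀ v, MX v ω' + (if v ∈ D then c else 0) ≤ MX v ω := by
          intro v
          by_cases hvD : v ∈ D
          · rw [if_pos hvD]
            obtain ⟨x, hxS, hxv⟩ := (Finset.mem_filter.1 hvD).2
            have hxN1 : x ∈ insert v (firstNbhd adj v) := by
              rcases hxv with rfl | hadj
              · exact Finset.mem_insert_self _ _
              · exact Finset.mem_insert_of_mem
                  (Finset.mem_filter.2 ⟨Finset.mem_univ x, hadj⟩)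
            obtain ⟨y, hy, hyeq⟩ := hMXex v ω'
            rw [hyeq]
            by_cases hyS : y ∈ S
            · have : ω' y = ω y - c := by simp only [hω', if_pos hyS]
              rw [this]
              have := hMXle v ω y hy
              linarith
            · have : ω' y = 0 := by simp only [hω', if_neg hyS]
              rw [this, zero_add]
              calc c ≤ ω x := hcle x hxS
                _ ≤ MX v ω := hMXle v ω x hxN1
          · rw [if_neg hvD, add_zero]
            refine hMXle' v ω' _ fun y hy => ?_
            by_cases hyS : y ∈ S
            · exfalso
              apply hvD
              refine Finset.mem_filter.2 ⟨Finset.mem_univ v, ⟨y, hyS, ?_⟩⟩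
              rcases Finset.mem_insert.1 hy with rfl | hmem
              · exact Or.inl rfl
              · exact Or.inr (Finset.mem_filter.1 hmem).2
            · have : ω' y = 0 := by simp only [hω', if_neg hyS]
              rw [this]
              calc (0:ℝ) ≤ ω v := hω0 v
                _ ≤ MX v ω := hMXle v ω v (Finset.mem_insert_self _ _)
        -- sum up
        have hsum1 : ∑ v, p v * MX v ω' + c * ∑ v ∈ D, p v ≤ ∑ v, p v * MX v ω := by
          have h1 : ∀ v, p v * MX v ω' + (if v ∈ D then p v * c else 0) ≤ p v * MX v ω := by
            intro v
            have := hpt v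
            have h2 : p v * (MX v ω' + (if v ∈ D then c else 0)) ≤ p v * MX v ω :=
              mul_le_mul_of_nonneg_left this (hp0 v)
            rw [mul_add] at h2
            rcases Finset.decidableMem v D with h | h
            · simpa [h] using h2
            · simpa [h] using h2
          calc ∑ v, p v * MX v ω' + c * ∑ v ∈ D, p v
              = ∑ v, (p v * MX v ω' + (if v ∈ D then p v * c else 0)) := by
                rw [Finset.sum_add_distrib]
                congr 1
                rw [Finset.mul_sum, Finset.sum_ite_mem, Finset.univ_inter]
                exact Finset.sum_congr rfl fun v _ => mul_comm _ _
            _ ≤ ∑ v, p v * MX v ω := Finset.sum_le_sum fun v _ => h1 v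
        have hsum2 : ∑ x, p x * ω x = ∑ x, p x * ω' x + c * ∑ x ∈ S, p x := by
          have h1 : ∀ x, p x * ω x = p x * ω' x + (if x ∈ S then p x * c else 0) := by
            intro x
            simp only [hω']
            by_cases hxS : x ∈ S
            · rw [if_pos hxS, if_pos hxS]; ring
            · rw [if_neg hxS, if_neg hxS]
              have : ω x = 0 := by
                by_contra hne
                exact hxS (Finset.mem_filter.2 ⟨Finset.mem_univ x, hne⟩)
              rw [this]; ring
          rw [Finset.sum_congr rfl fun x _ => h1 x, Finset.sum_add_distrib]
          congr 1
          rw [Finset.mul_sum, Finset.sum_ite_mem, Finset.univ_inter]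
          exact Finset.sum_congr rfl fun v _ => mul_comm _ _
        have hBc : c * (2 * ∑ x ∈ S, p x) ≤ c * ∑ v ∈ D, p v :=
          mul_le_mul_of_nonneg_left hB hcpos.le
        rw [hsum2]
        linarith
  -- conclude: apply key to ω = w · s, sum over s
  have hper : ∀ s : V, 2 * (∑ x, p x * w x s) ≤ ∑ v, p v * MX v (fun x => w x s) := by
    intro s
    refine key (Fintype.card V) s _ ?_ (fun x => hw_nonneg x s) ?_
    · exact le_trans (Finset.card_le_card (Finset.subset_univ _)) (le_of_eq (Finset.card_univ))
    · intro x hx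
      by_contra hnadj
      exact hx (hw_arc x s hnadj)
  -- exchange sums
  have hglobal : 2 * (∑ x, p x * (∑ s, w x s)) ≤ ∑ v, p v * (∑ s, MX v (fun x => w x s)) := by
    have h1 : ∑ s, 2 * (∑ x, p x * w x s) ≤ ∑ s, ∑ v, p v * MX v (fun x => w x s) :=
      Finset.sum_le_sum fun s _ => hper s
    have h2 : ∑ s : V, 2 * (∑ x, p x * w x s) = 2 * ∑ x, p x * (∑ s, w x s) := by
      rw [← Finset.mul_sum, Finset.sum_comm]
      congr 1
      exact Finset.sum_congr rfl fun x _ => by rw [Finset.mul_sum]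
    have h3 : ∑ s : V, ∑ v, p v * MX v (fun x => w x s)
        = ∑ v, p v * (∑ s, MX v (fun x => w x s)) := by
      rw [Finset.sum_comm]
      exact Finset.sum_congr rfl fun v _ => by rw [Finset.mul_sum]
    linarith [h1, h2.symm.le, h3.le]
  -- extract a good vertex
  by_contra hno
  push_neg at hno
  have hex : ∃ v, 0 < p v := by
    by_contra hall
    push_neg at hall
    have : ∑ v, p v = 0 :=
      le_antisymm (Finset.sum_nonpos fun v _ => hall v) (Finset.sum_nonneg fun v _ => hp0 v)
    rw [hp1] at this
    norm_num at this
  obtain ⟨v₀, hv₀⟩ := hex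
  have hlt : ∑ v, p v * (∑ s, MX v (fun x => w x s)) < ∑ v, p v * (2 * (∑ s, w v s)) := by
    refine Finset.sum_lt_sum (fun v _ => ?_) ⟨v₀, Finset.mem_univ v₀, ?_⟩
    · exact mul_le_mul_of_nonneg_left (hno v).le (hp0 v)
    · exact mul_lt_mul_of_pos_left (hno v₀) hv₀
  have heq : ∑ v, p v * (2 * (∑ s, w v s)) = 2 * (∑ x, p x * (∑ s, w x s)) := by
    rw [Finset.mul_sum]
    exact Finset.sum_congr rfl fun v _ => by ring
  rw [heq] at hlt
  linarith



/-- **Every arc-weighted tournament contains a Seymour vertex.**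
A tournament is an irreflexive digraph in which, for every pair of distinct vertices,
exactly one of the two possible arcs is present.  Given any nonnegative arc-weighting
(with weight `0` on non-arcs), there is a vertex `v` with `δ_v = β_v − α_v ≥ 0`. -/
theorem arc_weighted_tournament_has_seymour_vertex
    {V : Type*} [Fintype V] [DecidableEq V] [Nonempty V]
    (adj : V → V → Prop) [DecidableRel adj]
    (hirr : ∀ v, ¬ adj v v)
    (htour : ∀ u v : V, u ≠ v → (adj u v ↔ ¬ adj v u))
    (w : V → V → ℝ)
    (hw_nonneg : ∀ a b, 0 ≤ w a b)
    (hw_arc : ∀ a b, ¬ adj a b → w a b = 0) :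
    ∃ v : V, 0 ≤ deltaW adj w v := by
  classical
  obtain ⟨p, hp0, hp1, hpdom⟩ := exists_dominant_dist adj hirr htour
  obtain ⟨v, hv⟩ := exists_expander adj hirr htour w hw_nonneg hw_arc p hp0 hp1 hpdom
  refine ⟨v, ?_⟩
  have hA : alphaW adj w v = ∑ s, w v s := by
    rw [alphaW, firstNbhd, Finset.sum_filter]
    refine Finset.sum_congr rfl fun u _ => ?_
    by_cases h : adj v u
    · rw [if_pos h]
    · rw [if_neg h, hw_arc v u h]
  have hBS : ∀ s, (insert v (firstNbhd adj v)).sup' (Finset.insert_nonempty _ _)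
      (fun x => w x s) - w v s ≤ betaS adj w v s := by
    intro s
    have hb0 : (0:ℝ) ≤ betaS adj w v s := Finset.le_max' _ 0 (Finset.mem_insert_self _ _)
    obtain ⟨y, hy, hyeq⟩ := Finset.exists_mem_eq_sup'
      (Finset.insert_nonempty v (firstNbhd adj v)) (fun x => w x s)
    rw [hyeq]
    rcases Finset.mem_insert.1 hy with rfl | hmem
    · simpa using hb0
    · have hadj : adj v y := (Finset.mem_filter.1 hmem).2
      by_cases hys : adj y s
      · refine Finset.le_max' _ _ ?_
        refine Finset.mem_insert_of_mem ?_
        exact Finset.mem_image_of_mem _ (Finset.mem_filter.2 ⟨Finset.mem_univ y, ⟨hadj, hys⟩⟩)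
      · rw [hw_arc y s hys]
        have := hw_nonneg v s
        linarith
  rw [deltaW, betaW]
  have h1 : ∑ s, ((insert v (firstNbhd adj v)).sup' (Finset.insert_nonempty _ _)
      (fun x => w x s) - w v s) ≤ ∑ s, betaS adj w v s :=
    Finset.sum_le_sum fun s _ => hBS s
  rw [Finset.sum_sub_distrib] at h1
  rw [hA]
  linarith [hv, h1]
end

section
/- Every tournament contains a Seymour vertex, i.e., there exists a vertex v with |N1+(v)| ≤ |N2+(v)|. (Fisher's theorem, reproved in this paper as a consequence of the arc-weighted tournament theorem.) -/
open Finset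

set_option maxHeartbeats 1000000

set_option linter.unusedSectionVars false

section Infra
variable {V : Type*} [DecidableEq V] (adj : V → V → Prop) [DecidableRel adj]

/-- number of forward pairs in a list -/
def wgt : List V → ℕ
  | [] => 0
  | a :: t => t.countP (fun u => decide (adj a u)) + wgt t

def crossW (x y : List V) : ℕ := (x.map (fun p => y.countP (fun u => decide (adj p u)))).sum

lemma wgt_append (x y : List V) :
    wgt adj (x ++ y) = wgt adj x + wgt adj y + crossW adj x y := by
  induction x with
  | nil => simp [wgt, crossW]
  | cons a t ih =>
    simp only [List.cons_append, wgt, List.append_eq, List.countP_append, ih, crossW,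
      List.map_cons, List.sum_cons]
    ring

lemma crossW_perm_right (x : List V) {y y' : List V} (h : y.Perm y') :
    crossW adj x y = crossW adj x y' := by
  unfold crossW
  congr 1
  exact List.map_congr_left (fun p _ => h.countP_eq _)

lemma crossW_perm_left {x x' : List V} (h : x.Perm x') (y : List V) :
    crossW adj x y = crossW adj x' y :=
  (h.map _).sum_eq

def Med (l : List V) : Prop := ∀ l', l'.Perm l → wgt adj l' ≤ wgt adj l

lemma med_mid (a m c : List V) (h : Med adj (a ++ m ++ c)) : Med adj m := by
  intro m' hp
  have hperm : (a ++ m' ++ c).Perm (a ++ m ++ c) := by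
    simpa [List.append_assoc] using ((hp.append_right c).append_left a)
  have hle := h _ hperm
  have e : ∀ z : List V, wgt adj (a ++ z ++ c) =
      wgt adj a + wgt adj z + wgt adj c + crossW adj a (z ++ c) + crossW adj z c := by
    intro z
    rw [List.append_assoc, wgt_append, wgt_append]
    ring
  rw [e m', e m, crossW_perm_right adj a (hp.append_right c),
    crossW_perm_left adj hp c] at hle
  omega

lemma crossW_singleton (x : List V) (f : V) :
    crossW adj x [f] = x.countP (fun u => decide (adj u f)) := by
  induction x with
  | nil => simp [crossW]
  | cons a t ih =>
    simp [crossW, List.countP_cons] at ih ⊢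
    omega

lemma feed_ineq (l₀ : List V) (f : V) (h : Med adj (l₀ ++ [f])) :
    l₀.countP (fun u => decide (adj f u)) ≤ l₀.countP (fun u => decide (adj u f)) := by
  have hp : (f :: l₀).Perm (l₀ ++ [f]) := (List.perm_append_singleton f l₀).symm
  have hle := h _ hp
  rw [wgt_append, crossW_singleton] at hle
  simp [wgt] at hle
  omega

lemma countP_toFinset (p : V → Prop) [DecidablePred p] :
    ∀ {l : List V}, l.Nodup → (l.toFinset.filter p).card = l.countP (fun u => decide (p u))
  | [], _ => by simp
  | a :: t, h => by
    have ha : a ∉ t := (List.nodup_cons.mp h).1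
    have ih := countP_toFinset p (List.nodup_cons.mp h).2
    rw [List.toFinset_cons, Finset.filter_insert, List.countP_cons]
    by_cases hpa : p a
    · rw [if_pos hpa, Finset.card_insert_of_notMem (by simp [List.mem_toFinset, ha]), ih]
      simp [hpa]
    · rw [if_neg hpa, ih]
      simp [hpa]


def NpL (l : List V) (f : V) : Finset V := l.toFinset.filter (fun u => adj f u)

def NppL (l : List V) (f : V) : Finset V :=
  l.toFinset.filter (fun u => u ≠ f ∧ ¬ adj f u ∧ ∃ x ∈ l.toFinset, adj f x ∧ adj x u)

def BadL (l : List V) (f : V) : Finset V :=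
  l.toFinset.filter (fun b => adj b f ∧ ∀ x ∈ l.toFinset, adj f x → adj b x)

lemma NppL_mono {l₁ l₂ : List V} (f : V) (h : l₁.toFinset ⊆ l₂.toFinset) :
    NppL adj l₁ f ⊆ NppL adj l₂ f := by
  intro u hu
  simp only [NppL, Finset.mem_filter] at hu ⊢
  obtain ⟨hul, hne, hnadj, x, hx, hfx, hxu⟩ := hu
  exact ⟨h hul, hne, hnadj, x, h hx, hfx, hxu⟩

lemma dropWhile_head_false {p : V → Bool} :
    ∀ {l b : List V} {x : V}, l.dropWhile p = x :: b → p x = false := by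
  intro l
  induction l with
  | nil => intro b x h; simp [List.dropWhile] at h
  | cons a t ih =>
    intro b x h
    by_cases hpa : p a = true
    · rw [List.dropWhile_cons_of_pos hpa] at h
      exact ih h
    · rw [List.dropWhile_cons_of_neg hpa] at h
      cases h
      simpa using hpa

variable (hirr : ∀ v, ¬ adj v v) (htour : ∀ u v : V, u ≠ v → (adj u v ↔ ¬ adj v u))

include hirr htour

lemma mem_NppL_of {l : List V} {f u : V} (hu : u ∈ l.toFinset) (huf : adj u f)
    (hnb : u ∉ BadL adj l f) : u ∈ NppL adj l f := by
  have hne : u ≠ f := by rintro rfl; exact hirr _ huf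
  have hnadj : ¬ adj f u := ((htour u f hne).mp huf)
  simp only [BadL, Finset.mem_filter, not_and, not_forall] at hnb
  obtain ⟨x, hx, hfx, hnux⟩ := hnb hu huf
  have hxu : x ≠ u := by rintro rfl; exact hnadj hfx
  have : adj x u := (htour x u hxu).mpr hnux
  simp only [NppL, Finset.mem_filter]
  exact ⟨hu, hne, hnadj, x, hx, hfx, this⟩

theorem main_lemma : ∀ n : ℕ, ∀ l₀ : List V, ∀ f : V, l₀.length ≤ n →
    (l₀ ++ [f]).Nodup → Med adj (l₀ ++ [f]) →
    (NpL adj (l₀ ++ [f]) f).card ≤ (NppL adj (l₀ ++ [f]) f).card := by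
  intro n
  induction n with
  | zero =>
    intro l₀ f hlen _ _
    have : l₀ = [] := List.length_eq_zero_iff.mp (Nat.le_zero.mp hlen)
    subst this
    simp [NpL, Finset.filter_singleton, hirr f]
  | succ n ih =>
    intro l₀ f hlen hnd hmed
    rcases l₀ with _ | ⟨x1, t⟩
    · simp [NpL, Finset.filter_singleton, hirr f]
    set l : List V := (x1 :: t) ++ [f] with hl
    have hfl₀ : f ∉ x1 :: t := by
      have := (List.nodup_append'.mp hnd).2.2
      intro hf
      exact this hf (by simp)
    by_cases hB : BadL adj l f = ∅
    · -- no bad vertices: feed inequality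
      have hnd₀ : (x1 :: t).Nodup := (List.nodup_append'.mp hnd).1
      have hNp : NpL adj l f = (x1 :: t).toFinset.filter (fun u => adj f u) := by
        apply Finset.ext
        intro u
        simp only [NpL, Finset.mem_filter, List.mem_toFinset, hl, List.mem_append,
          List.mem_singleton, List.not_mem_nil, or_false]
        constructor
        · rintro ⟨hu | rfl, h2⟩
          · exact ⟨hu, h2⟩
          · exact absurd h2 (hirr u)
        · rintro ⟨hu, h2⟩; exact ⟨Or.inl hu, h2⟩
      have h1 : (NpL adj l f).card ≤ ((x1 :: t).toFinset.filter (fun u => adj u f)).card := by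
        rw [hNp, countP_toFinset _ hnd₀, countP_toFinset _ hnd₀]
        exact feed_ineq adj (x1 :: t) f hmed
      have h2 : (x1 :: t).toFinset.filter (fun u => adj u f) ⊆ NppL adj l f := by
        intro u hu
        simp only [Finset.mem_filter, List.mem_toFinset] at hu
        refine mem_NppL_of adj hirr htour ?_ hu.2 (by simp [hB])
        simp only [List.mem_toFinset, hl, List.mem_append]
        exact Or.inl hu.1
      exact h1.trans (Finset.card_le_card h2)
    by_cases hfx : adj f x1
    swap
    · -- delete the first vertex x1 (an in-neighbor of f)
      have hmed' : Med adj (t ++ [f]) :=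
        med_mid adj [x1] (t ++ [f]) [] (by simpa [hl] using hmed)
      have hnd' : (t ++ [f]).Nodup := by
        have : l = [x1] ++ (t ++ [f]) := by simp [hl]
        exact ((this ▸ hnd).of_append_right)
      have hIH := ih t f (by simpa using hlen) hnd' hmed'
      have hNpeq : NpL adj l f = NpL adj (t ++ [f]) f := by
        apply Finset.ext
        intro u
        simp only [NpL, Finset.mem_filter, List.mem_toFinset, hl, List.mem_append,
          List.mem_cons, List.mem_singleton, List.not_mem_nil, or_false]
        constructor
        · rintro ⟨(rfl | hu) | rfl, h2⟩
          · exact absurd h2 hfx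
          · exact ⟨Or.inl hu, h2⟩
          · exact absurd h2 (hirr u)
        · rintro ⟨hu | rfl, h2⟩
          · exact ⟨Or.inl (Or.inr hu), h2⟩
          · exact absurd h2 (hirr u)
      have hsub : NppL adj (t ++ [f]) f ⊆ NppL adj l f := by
        apply NppL_mono
        intro u hu
        simp only [List.mem_toFinset, List.mem_append, List.mem_singleton, List.not_mem_nil, or_false] at hu
        simp only [List.mem_toFinset, hl, List.mem_append, List.mem_cons, List.mem_singleton, List.not_mem_nil, or_false]
        tauto
      rw [hNpeq]
      exact hIH.trans (Finset.card_le_card hsub)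
    · -- there is a bad vertex; split at the first one
      have hx1f : x1 ≠ f := fun h => hfl₀ (h ▸ (List.mem_cons_self : x1 ∈ x1 :: t))
      have hnx1f : ¬ adj x1 f := fun h => ((htour f x1 (Ne.symm hx1f)).mp hfx) h
      obtain ⟨b₀, hb₀⟩ := Finset.nonempty_iff_ne_empty.mpr hB
      have hb₀' := hb₀
      simp only [BadL, Finset.mem_filter, List.mem_toFinset] at hb₀'
      have hb₀l₀ : b₀ ∈ x1 :: t := by
        rcases (List.mem_append.mp hb₀'.1) with h | h
        · exact h
        · simp at h; subst h; exact absurd hb₀'.2.1 (hirr _)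
      set q : V → Bool := fun u => decide (u ∉ BadL adj l f) with hq
      set P : List V := (x1 :: t).takeWhile q with hP
      set R : List V := (x1 :: t).dropWhile q with hR
      have hPR : P ++ R = x1 :: t := List.takeWhile_append_dropWhile
      have hRne : R ≠ [] := by
        intro h
        have hmem : b₀ ∈ P := by rw [← hPR, h, List.append_nil] at hb₀l₀; exact hb₀l₀
        have := List.mem_takeWhile_imp hmem
        rw [hq] at this; simp at this; exact this hb₀
      obtain ⟨b, S, hRbS⟩ := List.exists_cons_of_ne_nil hRne
      have hbBad : b ∈ BadL adj l f := by
        have hd : (x1 :: t).dropWhile q = b :: S := by rw [← hR]; exact hRbS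
        have := dropWhile_head_false (p := q) hd
        rw [hq] at this; simpa using this
      have hPnB : ∀ u ∈ P, u ∉ BadL adj l f := by
        intro u hu
        have := List.mem_takeWhile_imp hu
        rw [hq] at this; simpa using this
      have hbad : adj b f ∧ ∀ x ∈ l.toFinset, adj f x → adj b x := by
        have := hbBad; simp only [BadL, Finset.mem_filter] at this; exact this.2
      have hbf : b ≠ f := by rintro rfl; exact hirr _ hbad.1
      have hnfb : ¬ adj f b := (htour b f hbf).mp hbad.1
      -- list decompositions
      have hme : l = (P ++ [b]) ++ (S ++ [f]) := by rw [hl, ← hPR, hRbS]; simp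
      have hme2 : l = P ++ ((b :: S) ++ [f]) := by rw [hl, ← hPR, hRbS]; simp
      -- P is nonempty (x1 is not bad)
      have hx1nB : x1 ∉ BadL adj l f := by
        simp only [BadL, Finset.mem_filter]
        rintro ⟨-, h1, -⟩
        exact hnx1f h1
      have hPcons : P = x1 :: t.takeWhile q := by
        rw [hP, List.takeWhile_cons_of_pos]
        rw [hq]; simpa using hx1nB
      -- lengths
      have hlenPR : P.length + (S.length + 1) = t.length + 1 := by
        have := congrArg List.length hPR
        simpa [hRbS] using this
      have hPpos : 1 ≤ P.length := by rw [hPcons]; simp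
      have hlent : t.length ≤ n := by simpa using hlen
      have hlenP : P.length ≤ n := by omega
      have hlenS : (b :: S).length ≤ n := by simp; omega
      -- nodup facts
      have hnd1 : ((P ++ [b]) ++ (S ++ [f])).Nodup := hme ▸ hnd
      have hndPb : (P ++ [b]).Nodup := hnd1.of_append_left
      have hndSf : ((b :: S) ++ [f]).Nodup := (hme2 ▸ hnd).of_append_right
      have hdisj : (P ++ [b]).Disjoint (S ++ [f]) := (List.nodup_append'.mp hnd1).2.2
      have hfP : f ∉ P := fun h => hdisj (List.mem_append_left [b] h) (by simp)
      have hbS : b ∉ S := fun h => hdisj (by simp) (List.mem_append_left [f] h)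
      have hPSdisj : P.Disjoint S := fun a ha hs =>
        hdisj (List.mem_append_left [b] ha) (List.mem_append_left [f] hs)
      -- membership in l
      have hlmem : ∀ u, u ∈ l ↔ u ∈ P ∨ u = b ∨ u ∈ S ∨ u = f := by
        intro u
        rw [hme]
        simp only [List.mem_append, List.mem_cons, List.mem_singleton, List.not_mem_nil,
          or_false, or_assoc]
      have hsubP : ∀ u ∈ P, u ∈ l.toFinset := by
        intro u hu; rw [List.mem_toFinset, hlmem]; exact Or.inl hu
      have hsubS : ∀ u ∈ S, u ∈ l.toFinset := by
        intro u hu; rw [List.mem_toFinset, hlmem]; exact Or.inr (Or.inr (Or.inl hu))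
      -- medians of the two intervals
      have hmed₁ : Med adj (P ++ [b]) :=
        med_mid adj [] (P ++ [b]) (S ++ [f]) (by rw [List.nil_append, ← hme]; exact hmed)
      have hmed₂ : Med adj ((b :: S) ++ [f]) :=
        med_mid adj P ((b :: S) ++ [f]) [] (by rw [List.append_nil, ← hme2]; exact hmed)
      -- induction hypotheses
      have IH₁ := ih P b hlenP hndPb hmed₁
      have IH₂ := ih (b :: S) f hlenS hndSf hmed₂
      -- the two halves of N+
      set A : Finset V := P.toFinset.filter (fun u => adj f u) with hA
      set C : Finset V := S.toFinset.filter (fun u => adj f u) with hC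
      set G : Finset V := NppL adj l f with hG
      have hNPsplit : NpL adj l f = A ∪ C := by
        apply Finset.ext
        intro u
        simp only [NpL, hA, hC, Finset.mem_filter, Finset.mem_union, List.mem_toFinset, hlmem]
        constructor
        · rintro ⟨(h | rfl | h | rfl), ha⟩
          · exact Or.inl ⟨h, ha⟩
          · exact absurd ha hnfb
          · exact Or.inr ⟨h, ha⟩
          · exact absurd ha (hirr _)
        · rintro (⟨h, ha⟩ | ⟨h, ha⟩)
          · exact ⟨Or.inl h, ha⟩
          · exact ⟨Or.inr (Or.inr (Or.inl h)), ha⟩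
      have hACdisj : Disjoint A C := by
        rw [hA, hC]
        exact Finset.disjoint_filter_filter
          (List.disjoint_toFinset_iff_disjoint.mpr hPSdisj)
      -- bound A via the prefix
      have hAsub : A ⊆ NpL adj (P ++ [b]) b := by
        intro u hu
        rw [hA, Finset.mem_filter, List.mem_toFinset] at hu
        rw [NpL, Finset.mem_filter, List.mem_toFinset]
        exact ⟨List.mem_append_left [b] hu.1, hbad.2 u (hsubP u hu.1) hu.2⟩
      have hPrefGood : NppL adj (P ++ [b]) b ⊆ G ∩ P.toFinset := by
        intro u hu
        simp only [NppL, Finset.mem_filter, List.mem_toFinset, List.mem_append,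
          List.mem_singleton, List.not_mem_nil, or_false] at hu
        obtain ⟨hul, hub, hnbu, -⟩ := hu
        have huP : u ∈ P := by rcases hul with h | rfl; exact h; exact absurd rfl hub
        have hnfu : ¬ adj f u := fun h => hnbu (hbad.2 u (hsubP u huP) h)
        have hunf : u ≠ f := fun h => hfP (h ▸ huP)
        have huf : adj u f := (htour u f hunf).mpr hnfu
        refine Finset.mem_inter.mpr ⟨?_, List.mem_toFinset.mpr huP⟩
        exact mem_NppL_of adj hirr htour (hsubP u huP) huf (hPnB u huP)
      have boundA : A.card ≤ (G ∩ P.toFinset).card :=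
        ((Finset.card_le_card hAsub).trans IH₁).trans (Finset.card_le_card hPrefGood)
      -- bound C via the suffix
      have hCeq : C = NpL adj ((b :: S) ++ [f]) f := by
        apply Finset.ext
        intro u
        simp only [hC, NpL, Finset.mem_filter, List.mem_toFinset, List.mem_append,
          List.mem_cons, List.mem_singleton, List.not_mem_nil, or_false]
        constructor
        · rintro ⟨h, ha⟩
          exact ⟨Or.inl (Or.inr h), ha⟩
        · rintro ⟨(rfl | h) | rfl, ha⟩
          · exact absurd ha hnfb
          · exact ⟨h, ha⟩
          · exact absurd ha (hirr u)
      have hsubl₂ : ((b :: S) ++ [f]).toFinset ⊆ l.toFinset := by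
        intro u hu
        simp only [List.mem_toFinset, List.mem_append, List.mem_cons,
          List.mem_singleton, List.not_mem_nil, or_false] at hu
        rw [List.mem_toFinset, hlmem]
        rcases hu with (rfl | h) | rfl
        · exact Or.inr (Or.inl rfl)
        · exact Or.inr (Or.inr (Or.inl h))
        · exact Or.inr (Or.inr (Or.inr rfl))
      have hSufGood : NppL adj ((b :: S) ++ [f]) f ⊆ G ∩ S.toFinset := by
        intro u hu
        have huG : u ∈ G := NppL_mono adj f hsubl₂ hu
        simp only [NppL, Finset.mem_filter, List.mem_toFinset, List.mem_append,
          List.mem_cons, List.mem_singleton, List.not_mem_nil, or_false] at hu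
        obtain ⟨hul, huf, hnfu, x, hx, hfx, hxu⟩ := hu
        have hub : u ≠ b := by
          rintro rfl
          have hxl : x ∈ l.toFinset := by
            rw [List.mem_toFinset, hlmem]
            rcases hx with (rfl | h) | rfl
            · exact Or.inr (Or.inl rfl)
            · exact Or.inr (Or.inr (Or.inl h))
            · exact Or.inr (Or.inr (Or.inr rfl))
          have hbx : adj u x := hbad.2 x hxl hfx
          have hxb : x ≠ u := by rintro rfl; exact hnfb hfx
          exact ((htour x u hxb).mp hxu) hbx
        have huS : u ∈ S := by
          rcases hul with (rfl | h) | rfl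
          · exact absurd rfl hub
          · exact h
          · exact absurd rfl huf
        exact Finset.mem_inter.mpr ⟨huG, List.mem_toFinset.mpr huS⟩
      have boundC : C.card ≤ (G ∩ S.toFinset).card := by
        rw [hCeq]
        exact IH₂.trans (Finset.card_le_card hSufGood)
      -- combine
      have hGdisj : Disjoint (G ∩ P.toFinset) (G ∩ S.toFinset) :=
        ((List.disjoint_toFinset_iff_disjoint.mpr hPSdisj).mono
          Finset.inter_subset_right Finset.inter_subset_right)
      calc (NpL adj l f).card = A.card + C.card := by
              rw [hNPsplit, Finset.card_union_of_disjoint hACdisj]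
        _ ≤ (G ∩ P.toFinset).card + (G ∩ S.toFinset).card := Nat.add_le_add boundA boundC
        _ = ((G ∩ P.toFinset) ∪ (G ∩ S.toFinset)).card :=
              (Finset.card_union_of_disjoint hGdisj).symm
        _ ≤ G.card := Finset.card_le_card (by
              intro u hu
              rcases Finset.mem_union.mp hu with h | h
              exacts [(Finset.mem_inter.mp h).1, (Finset.mem_inter.mp h).1])

theorem seymour_final [Fintype V] [Nonempty V] :
    ∃ v : V, (Finset.univ.filter (fun u => adj v u)).card ≤
      (Finset.univ.filter (fun u => u ≠ v ∧ ¬ adj v u ∧ ∃ x, adj v x ∧ adj x u)).card := by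
  classical
  set L0 := (Finset.univ : Finset V).toList with hL0
  have hnd0 : L0.Nodup := Finset.nodup_toList _
  have hmemall : ∀ v : V, v ∈ L0 := fun v => Finset.mem_toList.mpr (Finset.mem_univ v)
  have hne : L0.permutations.toFinset.Nonempty :=
    ⟨L0, by simp [List.mem_permutations]⟩
  obtain ⟨l, hl, hmax⟩ := Finset.exists_max_image L0.permutations.toFinset (wgt adj) hne
  have hperm : l.Perm L0 := List.mem_permutations.mp (by simpa using hl)
  have hmed : Med adj l := by
    intro l' hp
    refine hmax l' ?_
    simp only [List.mem_toFinset, List.mem_permutations]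
    exact hp.trans hperm
  have hlnd : l.Nodup := hperm.nodup_iff.mpr hnd0
  have hlmemall : ∀ v : V, v ∈ l := fun v => (hperm.mem_iff).mpr (hmemall v)
  have hlne : l ≠ [] := by
    intro h
    obtain ⟨v⟩ := ‹Nonempty V›
    rw [h] at hlmemall
    exact List.not_mem_nil (hlmemall v)
  set f := l.getLast hlne with hf
  set l₀ := l.dropLast with hl₀
  have he : l₀ ++ [f] = l := List.dropLast_append_getLast hlne
  have hmain := main_lemma adj hirr htour l₀.length l₀ f le_rfl
    (by rw [he]; exact hlnd) (by rw [he]; exact hmed)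
  refine ⟨f, ?_⟩
  have htf : (l₀ ++ [f]).toFinset = Finset.univ := by
    apply Finset.ext
    intro u
    simp only [List.mem_toFinset, he, Finset.mem_univ, iff_true]
    exact hlmemall u
  have h1 : Finset.univ.filter (fun u => adj f u) = NpL adj (l₀ ++ [f]) f := by
    rw [NpL, htf]
  have h2 : NppL adj (l₀ ++ [f]) f ⊆
      Finset.univ.filter (fun u => u ≠ f ∧ ¬ adj f u ∧ ∃ x, adj f x ∧ adj x u) := by
    intro u hu
    simp only [NppL, Finset.mem_filter] at hu
    obtain ⟨-, hne', hnadj, x, -, hfx, hxu⟩ := hu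
    simp only [Finset.mem_filter, Finset.mem_univ, true_and]
    exact ⟨hne', hnadj, x, hfx, hxu⟩
  rw [h1]
  exact hmain.trans (Finset.card_le_card h2)

end Infra

/-- **Fisher's theorem.** Every tournament contains a Seymour vertex, i.e., a vertex whose
second out-neighborhood is at least as large as its first out-neighborhood. -/
theorem tournament_has_seymour_vertex
    {V : Type*} [Fintype V] [DecidableEq V] [Nonempty V]
    (adj : V → V → Prop) [DecidableRel adj]
    (hirr : ∀ v, ¬ adj v v)
    (htour : ∀ u v : V, u ≠ v → (adj u v ↔ ¬ adj v u)) :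
    ∃ v : V, (firstNbhd adj v).card ≤ (secondNbhd adj v).card := by
  obtain ⟨v, hv⟩ := seymour_final adj hirr htour
  exact ⟨v, by simpa [firstNbhd, secondNbhd] using hv⟩
end

section
/- For every digraph D, exactly one of the following holds: (1) there exists a nonnegative vertex-weighting η : V → ℝ with Σ_{v ∈ V} η(v) = 1 such that η(N1+(v)) ≤ η(N2+(v)) for every vertex v (i.e., every vertex of D is weakly expanding); (2) there exists a nonnegative vertex-weighting η : V → ℝ such that η(N1−(v)) > η(N2−(v)) for every vertex v (i.e., every vertex of the reverse digraph of D is strongly contracting). -/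
set_option linter.unusedSectionVars false


open Finset

section Aux
variable {V : Type*} [Fintype V] [DecidableEq V]
variable (adj : V → V → Prop) [DecidableRel adj]

/-- matrix entry: indicator of first nbhd minus indicator of second nbhd -/
def gmat (v u : V) : ℝ :=
  (if u ∈ firstNbhd adj v then (1:ℝ) else 0) - (if u ∈ secondNbhd adj v then (1:ℝ) else 0)

lemma gsum (η : V → ℝ) (v : V) :
    ∑ u, gmat adj v u * η u
      = ∑ u ∈ firstNbhd adj v, η u - ∑ u ∈ secondNbhd adj v, η u := by
  simp [gmat, sub_mul, Finset.sum_sub_distrib, ite_mul, Finset.sum_ite, Finset.sum_filter]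

lemma first_rev (s u : V) :
    u ∈ firstNbhd (fun a b => adj b a) s ↔ s ∈ firstNbhd adj u := by
  simp [firstNbhd]

lemma second_rev (s u : V) :
    u ∈ secondNbhd (fun a b => adj b a) s ↔ s ∈ secondNbhd adj u := by
  simp only [secondNbhd, Finset.mem_filter, Finset.mem_univ, true_and]
  constructor
  · rintro ⟨h1, h2, x, hx1, hx2⟩; exact ⟨h1.symm, h2, x, hx2, hx1⟩
  · rintro ⟨h1, h2, x, hx1, hx2⟩; exact ⟨h1.symm, h2, x, hx2, hx1⟩

lemma gsumT (η : V → ℝ) (s : V) :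
    ∑ v, gmat adj v s * η v
      = ∑ u ∈ firstNbhd (fun a b => adj b a) s, η u
        - ∑ u ∈ secondNbhd (fun a b => adj b a) s, η u := by
  have h1 : firstNbhd (fun a b => adj b a) s = Finset.univ.filter (fun u => s ∈ firstNbhd adj u) := by
    ext u; simp [first_rev]
  have h2 : secondNbhd (fun a b => adj b a) s = Finset.univ.filter (fun u => s ∈ secondNbhd adj u) := by
    ext u; simp [second_rev]
  rw [h1, h2]
  simp [gmat, sub_mul, Finset.sum_sub_distrib, ite_mul, Finset.sum_filter]
end Aux

section Main
variable {V : Type*} [Fintype V] [DecidableEq V]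
variable (adj : V → V → Prop) [DecidableRel adj]

set_option linter.unusedSectionVars false

lemma not_both
    (h1 : ∃ η : V → ℝ, (∀ v, 0 ≤ η v) ∧ (∑ v, η v) = 1 ∧
        ∀ v, ∑ u ∈ firstNbhd adj v, η u ≤ ∑ u ∈ secondNbhd adj v, η u)
    (h2 : ∃ η : V → ℝ, (∀ v, 0 ≤ η v) ∧
        ∀ v, ∑ u ∈ secondNbhd (fun a b => adj b a) v, η u <
          ∑ u ∈ firstNbhd (fun a b => adj b a) v, η u) : False := by
  obtain ⟨η₁, hη₁0, hη₁sum, hη₁⟩ := h1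
  obtain ⟨η₂, hη₂0, hη₂⟩ := h2
  have key : ∀ v, ∑ u, gmat adj v u * η₁ u ≤ 0 := fun v => by
    rw [gsum]; linarith [hη₁ v]
  have keyT : ∀ s, 0 < ∑ v, gmat adj v s * η₂ v := fun s => by
    rw [gsumT]; linarith [hη₂ s]
  have T1 : ∑ v, η₂ v * ∑ u, gmat adj v u * η₁ u ≤ 0 := by
    apply Finset.sum_nonpos
    intro v _
    exact mul_nonpos_of_nonneg_of_nonpos (hη₂0 v) (key v)
  have Tswap : ∑ v, η₂ v * ∑ u, gmat adj v u * η₁ u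
      = ∑ u, η₁ u * ∑ v, gmat adj v u * η₂ v := by
    simp_rw [Finset.mul_sum]
    rw [Finset.sum_comm]
    congr 1; ext u; congr 1; ext v; ring
  have hex : ∃ u ∈ Finset.univ, 0 < η₁ u * ∑ v, gmat adj v u * η₂ v := by
    by_contra h
    push_neg at h
    have : ∀ u, η₁ u = 0 := by
      intro u
      have h0 := h u (Finset.mem_univ u)
      have := keyT u
      rcases lt_or_eq_of_le (hη₁0 u) with hp | hz
      · exfalso; nlinarith
      · exact hz.symm
    simp [this] at hη₁sum
  have T2 : 0 < ∑ u, η₁ u * ∑ v, gmat adj v u * η₂ v := by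
    apply Finset.sum_pos'
    · intro u _
      exact mul_nonneg (hη₁0 u) (le_of_lt (keyT u))
    · exact hex
  rw [Tswap] at T1
  linarith
end Main

section Sep
variable {V : Type*} [Fintype V] [DecidableEq V]
variable (adj : V → V → Prop) [DecidableRel adj]

set_option linter.unusedSectionVars false

/-- the linear map x ↦ (v ↦ Σ_u gmat v u * x u) -/
noncomputable def gLin : (V → ℝ) →ₗ[ℝ] (V → ℝ) where
  toFun x := fun v => ∑ u, gmat adj v u * x u
  map_add' x y := by
    ext v; simp [mul_add, Finset.sum_add_distrib]
  map_smul' c x := by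
    ext v; simp [Finset.mul_sum, smul_eq_mul]; ring_nf; simp [mul_comm, mul_assoc, mul_left_comm]

lemma at_least_one :
    (∃ η : V → ℝ, (∀ v, 0 ≤ η v) ∧ (∑ v, η v) = 1 ∧
        ∀ v, ∑ u ∈ firstNbhd adj v, η u ≤ ∑ u ∈ secondNbhd adj v, η u)
    ∨ (∃ η : V → ℝ, (∀ v, 0 ≤ η v) ∧
        ∀ v, ∑ u ∈ secondNbhd (fun a b => adj b a) v, η u <
          ∑ u ∈ firstNbhd (fun a b => adj b a) v, η u) := by
  by_cases hA : ∃ η : V → ℝ, (∀ v, 0 ≤ η v) ∧ (∑ v, η v) = 1 ∧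
      ∀ v, ∑ u ∈ firstNbhd adj v, η u ≤ ∑ u ∈ secondNbhd adj v, η u
  · exact Or.inl hA
  right
  set L : (V → ℝ) →L[ℝ] (V → ℝ) := (gLin adj).toContinuousLinearMap with hL
  set A : Set (V → ℝ) := L '' stdSimplex ℝ V with hAdef
  set B : Set (V → ℝ) := {z | ∀ v, z v ≤ 0} with hBdef
  have hAcv : Convex ℝ A := (convex_stdSimplex ℝ V).linear_image (gLin adj)
  have hAcp : IsCompact A := (isCompact_stdSimplex ℝ V).image L.continuous
  have hBcv : Convex ℝ B := by
    intro x hx y hy a b ha hb hab v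
    have := hx v; have := hy v
    have : a * x v + b * y v ≤ 0 := by nlinarith
    simpa using this
  have hBcl : IsClosed B := by
    have : B = ⋂ v, {z : V → ℝ | z v ≤ 0} := by
      ext z; simp [hBdef]
    rw [this]
    exact isClosed_iInter fun v => isClosed_le (continuous_apply v) continuous_const
  have hdisj : Disjoint A B := by
    rw [Set.disjoint_left]
    rintro z ⟨x, hx, rfl⟩ hzB
    exact hA ⟨x, hx.1, hx.2, fun v => by
      have := hzB v
      simp only [hL, LinearMap.coe_toContinuousLinearMap', gLin, LinearMap.coe_mk,
        AddHom.coe_mk] at this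
      rw [gsum] at this
      linarith⟩
  obtain ⟨f, r, s, hfA, hrs, hfB⟩ :=
    geometric_hahn_banach_compact_closed hAcv hAcp hBcv hBcl hdisj
  have h0B : (0 : V → ℝ) ∈ B := fun v => le_refl 0
  have hs0 : s < 0 := by have := hfB 0 h0B; simpa using this
  have hfBnn : ∀ b ∈ B, 0 ≤ f b := by
    intro b hb
    by_contra h
    push_neg at h
    have ht : (0:ℝ) ≤ s / f b := le_of_lt (div_pos_of_neg_of_neg hs0 h)
    have htb : (s / f b) • b ∈ B := by
      intro v
      exact mul_nonpos_of_nonneg_of_nonpos ht (hb v)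
    have := hfB _ htb
    rw [map_smul, smul_eq_mul, div_mul_cancel₀ _ (ne_of_lt h)] at this
    exact lt_irrefl s this
  set η : V → ℝ := fun w => -f (Pi.single w 1) with hη
  have hηnn : ∀ w, 0 ≤ η w := by
    intro w
    have hmem : (-(Pi.single w 1) : V → ℝ) ∈ B := by
      intro v
      simp only [Pi.neg_apply, Pi.single_apply]
      split <;> norm_num
    have := hfBnn _ hmem
    rw [map_neg] at this
    simpa [hη] using this
  have hrep : ∀ z : V → ℝ, f z = ∑ w, z w * f (Pi.single w 1) := by
    intro z
    have hz : z = ∑ w, z w • (Pi.single w 1 : V → ℝ) := by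
      ext v
      simp [Pi.single_apply, Finset.sum_ite_eq']
    conv_lhs => rw [hz]
    rw [map_sum]
    congr 1; ext w
    rw [map_smul, smul_eq_mul]
  refine ⟨η, hηnn, fun u0 => ?_⟩
  have he : Pi.single u0 (1:ℝ) ∈ stdSimplex ℝ V := by
    constructor
    · intro v; simp [Pi.single_apply]; split <;> norm_num
    · simp [Pi.single_apply, Finset.sum_ite_eq']
  have hLa := hfA _ ⟨_, he, rfl⟩
  have hLe : ∀ v, L (Pi.single u0 (1:ℝ)) v = gmat adj v u0 := by
    intro v
    simp only [hL, LinearMap.coe_toContinuousLinearMap', gLin, LinearMap.coe_mk, AddHom.coe_mk]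
    simp [Pi.single_apply, mul_ite, Finset.sum_ite_eq']
  have hcalc : f (L (Pi.single u0 (1:ℝ))) = -∑ v, gmat adj v u0 * η v := by
    rw [hrep]
    simp only [hη]
    rw [← Finset.sum_neg_distrib]
    congr 1; ext v
    rw [hLe v]; ring
  rw [hcalc] at hLa
  have hpos : 0 < ∑ v, gmat adj v u0 * η v := by linarith
  rw [gsumT] at hpos
  linarith
end Sep


/-- For every digraph `D`, exactly one of the following holds:
(1) there is a nonnegative vertex-weighting `η` summing to `1` under which every vertex of
`D` is weakly expanding (`η(N1+(v)) ≤ η(N2+(v))` for all `v`); or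
(2) there is a nonnegative vertex-weighting `η` under which every vertex of the reverse
digraph of `D` is strongly contracting (`η(N1−(v)) > η(N2−(v))` for all `v`). -/
theorem expanding_or_contracting_weighting
    {V : Type*} [Fintype V] [DecidableEq V]
    (adj : V → V → Prop) [DecidableRel adj]
    (hirr : ∀ v, ¬ adj v v)
    (hasym : ∀ u v, adj u v → ¬ adj v u) :
    Xor'
      (∃ η : V → ℝ, (∀ v, 0 ≤ η v) ∧ (∑ v, η v) = 1 ∧
        ∀ v, ∑ u ∈ firstNbhd adj v, η u ≤ ∑ u ∈ secondNbhd adj v, η u)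
      (∃ η : V → ℝ, (∀ v, 0 ≤ η v) ∧
        ∀ v, ∑ u ∈ secondNbhd (fun a b => adj b a) v, η u <
          ∑ u ∈ firstNbhd (fun a b => adj b a) v, η u) := by
  rcases at_least_one adj with h | h
  · exact Or.inl ⟨h, fun h2 => not_both adj h h2⟩
  · exact Or.inr ⟨h, fun h1 => not_both adj h1 h⟩
end

section
/- Let D be a digraph with a nonnegative vertex-weighting η such that every arc of D is contained in a directed triangle (for every arc u → v there exists x with v → x and x → u). Then D contains a Seymour vertex, i.e., there exists a vertex v with η(N1+(v)) ≤ η(N2+(v)). -/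
open Finset

/-- If every arc of a vertex-weighted digraph lies in a directed triangle, then the digraph
contains a Seymour vertex: a vertex `v` with `η(N1+(v)) ≤ η(N2+(v))`. -/
theorem seymour_vertex_of_every_arc_in_triangle
    {V : Type*} [Fintype V] [DecidableEq V] [Nonempty V]
    (adj : V → V → Prop) [DecidableRel adj]
    (hirr : ∀ v, ¬ adj v v)
    (hasym : ∀ u v, adj u v → ¬ adj v u)
    (η : V → ℝ) (hη : ∀ v, 0 ≤ η v)
    (htri : ∀ u v, adj u v → ∃ x, adj v x ∧ adj x u) :
    ∃ v : V, ∑ u ∈ firstNbhd adj v, η u ≤ ∑ u ∈ secondNbhd adj v, η u := by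
  by_contra hcon
  push_neg at hcon
  -- the in-neighborhood of `v`
  set inN : V → Finset V := fun v => Finset.univ.filter (fun u => adj u v) with hinN
  -- every in-neighbor is a second out-neighbor
  have hsub : ∀ v, inN v ⊆ secondNbhd adj v := by
    intro v u hu
    simp only [hinN, Finset.mem_filter, Finset.mem_univ, true_and] at hu
    simp only [secondNbhd, Finset.mem_filter, Finset.mem_univ, true_and]
    refine ⟨?_, hasym u v hu, htri u v hu⟩
    rintro rfl; exact hirr u hu
  -- hence the in-weight is strictly less than the out-weight at every vertex
  have hlt : ∀ v, ∑ u ∈ inN v, η u < ∑ u ∈ firstNbhd adj v, η u := by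
    intro v
    calc ∑ u ∈ inN v, η u ≤ ∑ u ∈ secondNbhd adj v, η u :=
          Finset.sum_le_sum_of_subset_of_nonneg (hsub v) (fun i _ _ => hη i)
      _ < ∑ u ∈ firstNbhd adj v, η u := hcon v
  -- the double-counting identity: Σ_v η v * η(N⁺(v)) = Σ_v η v * η(N⁻(v))
  have key : ∑ v, η v * ∑ u ∈ firstNbhd adj v, η u = ∑ v, η v * ∑ u ∈ inN v, η u := by
    have h1 : ∀ v : V, η v * ∑ u ∈ firstNbhd adj v, η u
        = ∑ u, if adj v u then η v * η u else 0 := by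
      intro v
      rw [Finset.mul_sum, firstNbhd, Finset.sum_filter]
    have h2 : ∀ v : V, η v * ∑ u ∈ inN v, η u
        = ∑ u, if adj u v then η v * η u else 0 := by
      intro v
      rw [Finset.mul_sum, hinN, Finset.sum_filter]
    simp_rw [h1, h2]
    rw [Finset.sum_comm]
    refine Finset.sum_congr rfl (fun v _ => Finset.sum_congr rfl (fun u _ => ?_))
    split <;> [ring; rfl]
  -- therefore Σ_v η v * (out v - in v) = 0, a sum of nonnegative terms
  have hzero : ∑ v, η v * (∑ u ∈ firstNbhd adj v, η u - ∑ u ∈ inN v, η u) = 0 := by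
    simp_rw [mul_sub]
    rw [Finset.sum_sub_distrib, key, sub_self]
  have hterm : ∀ v ∈ Finset.univ,
      (0:ℝ) ≤ η v * (∑ u ∈ firstNbhd adj v, η u - ∑ u ∈ inN v, η u) := by
    intro v _
    exact mul_nonneg (hη v) (sub_nonneg.mpr (le_of_lt (hlt v)))
  have hall := (Finset.sum_eq_zero_iff_of_nonneg hterm).mp hzero
  -- so every vertex has weight zero
  have hη0 : ∀ v, η v = 0 := by
    intro v
    have h := hall v (Finset.mem_univ v)
    rcases mul_eq_zero.mp h with h' | h'
    · exact h'
    · exact absurd h' (by linarith [hlt v])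
  -- but then all neighborhood weights vanish, contradicting strictness
  obtain ⟨v⟩ := ‹Nonempty V›
  have h1 : ∑ u ∈ firstNbhd adj v, η u = 0 :=
    Finset.sum_eq_zero (fun u _ => hη0 u)
  have h2 : ∑ u ∈ inN v, η u = 0 :=
    Finset.sum_eq_zero (fun u _ => hη0 u)
  have := hlt v
  rw [h1, h2] at this
  exact lt_irrefl 0 this
end

section
/- The following two statements are equivalent: (i) every digraph contains a vertex v with |N1+(v)| ≤ |N2+(v)|; (ii) for every digraph D and every arc-weighting w of D, there exists a vertex v with δ_v ≥ 0. -/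
open Finset

section Helpers
variable {V : Type*} [Fintype V] (adj : V → V → Prop) [DecidableRel adj] (w : V → V → ℝ)

lemma betaS_nonneg (v s : V) : 0 ≤ betaS adj w v s :=
  Finset.le_max' _ _ (Finset.mem_insert_self _ _)

lemma le_betaS {v s u : V} (h1 : adj v u) (h2 : adj u s) :
    w u s - w v s ≤ betaS adj w v s :=
  by
  apply Finset.le_max'
  exact Finset.mem_insert_of_mem (Finset.mem_image.mpr ⟨u, by simp [h1, h2], rfl⟩)

lemma betaS_le {v s : V} {c : ℝ} (hc : 0 ≤ c)
    (h : ∀ u, adj v u → adj u s → w u s - w v s ≤ c) : betaS adj w v s ≤ c := by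
  apply Finset.max'_le
  intro y hy
  rcases Finset.mem_insert.mp hy with rfl | hy
  · exact hc
  · obtain ⟨u, hu, rfl⟩ := Finset.mem_image.mp hy
    simp only [Finset.mem_filter] at hu
    exact h u hu.2.1 hu.2.2

end Helpers
section Helpers2
variable {V : Type*} [Fintype V] (adj : V → V → Prop) [DecidableRel adj]

lemma betaS_smul (w : V → V → ℝ) {c : ℝ} (hc : 0 ≤ c) (v s : V) :
    betaS adj (fun a b => c * w a b) v s = c * betaS adj w v s := by
  rcases eq_or_lt_of_le hc with rfl | hc
  · simp only [zero_mul]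
    exact le_antisymm (betaS_le adj _ le_rfl (by simp)) (betaS_nonneg adj _ v s)
  · apply le_antisymm
    · apply betaS_le adj _ (mul_nonneg hc.le (betaS_nonneg adj w v s))
      intro u h1 h2
      have := le_betaS adj w h1 h2
      nlinarith
    · rw [mul_comm, ← le_div_iff₀ hc]
      apply betaS_le adj w (div_nonneg (betaS_nonneg adj _ v s) hc.le)
      intro u h1 h2
      rw [le_div_iff₀ hc]
      have := le_betaS adj (fun a b => c * w a b) h1 h2
      nlinarith

lemma alphaW_smul (w : V → V → ℝ) (c : ℝ) (v : V) :
    alphaW adj (fun a b => c * w a b) v = c * alphaW adj w v := by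
  simp [alphaW, Finset.mul_sum]

lemma deltaW_smul (w : V → V → ℝ) {c : ℝ} (hc : 0 ≤ c) (v : V) :
    deltaW adj (fun a b => c * w a b) v = c * deltaW adj w v := by
  simp only [deltaW, betaW, alphaW_smul, mul_sub, Finset.mul_sum]
  congr 1
  exact Finset.sum_congr rfl fun s _ => betaS_smul adj w hc v s

lemma deltaW_compare (w w' : V → V → ℝ) {e : ℝ} (he : 0 ≤ e)
    (h1 : ∀ a b, w' a b ≤ w a b) (h2 : ∀ a b, w a b ≤ w' a b + e) (v : V) :
    deltaW adj w' v ≤ deltaW adj w v + 2 * (Fintype.card V) * e := by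
  have hβ : betaW adj w' v ≤ betaW adj w v + (Fintype.card V) * e := by
    have : ∀ s : V, betaS adj w' v s ≤ betaS adj w v s + e := by
      intro s
      apply betaS_le adj w' (by linarith [betaS_nonneg adj w v s])
      intro u hu hus
      have := le_betaS adj w hu hus
      have := h1 u s
      have := h2 v s
      linarith
    calc betaW adj w' v ≤ ∑ s : V, (betaS adj w v s + e) :=
          Finset.sum_le_sum fun s _ => this s
      _ = betaW adj w v + (Fintype.card V) * e := by
          rw [Finset.sum_add_distrib, betaW, Finset.sum_const, nsmul_eq_mul,
            Finset.card_univ]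
  have hα : alphaW adj w v ≤ alphaW adj w' v + (Fintype.card V) * e := by
    calc alphaW adj w v ≤ ∑ u ∈ firstNbhd adj v, (w' v u + e) :=
          Finset.sum_le_sum fun u _ => h2 v u
      _ = alphaW adj w' v + (firstNbhd adj v).card * e := by
          rw [Finset.sum_add_distrib, alphaW, Finset.sum_const, nsmul_eq_mul]
      _ ≤ alphaW adj w' v + (Fintype.card V) * e := by
          have : (firstNbhd adj v).card ≤ Fintype.card V := Finset.card_le_univ _
          have : ((firstNbhd adj v).card : ℝ) ≤ Fintype.card V := by exact_mod_cast this
          nlinarith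
  simp only [deltaW]
  linarith

end Helpers2

section Counting

lemma card_filter_fin (M : ℕ) (p : ℕ → Prop) [DecidablePred p] :
    ((Finset.univ : Finset (Fin M)).filter fun j => p j.val).card
      = ((Finset.range M).filter p).card := by
  rw [Finset.card_filter, Finset.card_filter, Fin.sum_univ_eq_sum_range (fun m => if p m then 1 else 0)]

lemma card_filter_prod {A B : Type*} [Fintype A] [Fintype B] (P : A × B → Prop)
    [DecidablePred P] :
    ((Finset.univ : Finset (A × B)).filter P).card
      = ∑ a : A, ((Finset.univ : Finset B).filter fun b => P (a, b)).card := by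
  rw [Finset.card_filter, Fintype.sum_prod_type]
  exact Finset.sum_congr rfl fun a _ => (Finset.card_filter _ _).symm

end Counting

lemma intCase
    (H : ∀ (V : Type) [Fintype V] [DecidableEq V] (adj : V → V → Prop) [DecidableRel adj],
        Nonempty V → (∀ v, ¬ adj v v) → (∀ u v, adj u v → ¬ adj v u) →
        ∃ v : V, (firstNbhd adj v).card ≤ (secondNbhd adj v).card)
    (V : Type) [Fintype V] [DecidableEq V] (adj : V → V → Prop) [DecidableRel adj]
    (hne : Nonempty V) (hirr : ∀ v, ¬ adj v v) (hasym : ∀ u v, adj u v → ¬ adj v u)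
    (n : V → V → ℕ) (hz : ∀ a b, ¬ adj a b → n a b = 0) :
    ∃ v : V, 0 ≤ deltaW adj (fun a b => (n a b : ℝ)) v := by
  classical
  set M : ℕ := (∑ p : V, ∑ q : V, n p q) + 1 with hM'
  have hM : ∀ a b, n a b < M := by
    intro a b
    have h1 : n a b ≤ ∑ q : V, n a q :=
      Finset.single_le_sum (fun _ _ => Nat.zero_le _) (Finset.mem_univ b)
    have h2 : (∑ q : V, n a q) ≤ ∑ p : V, ∑ q : V, n p q :=
      Finset.single_le_sum (f := fun p => ∑ q : V, n p q)
        (fun _ _ => Nat.zero_le _) (Finset.mem_univ a)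
    omega
  have hadj : ∀ a b, 0 < n a b → adj a b := by
    intro a b h
    by_contra hc
    rw [hz a b hc] at h
    omega
  set adj' : V × Fin M → V × Fin M → Prop := fun p q => q.2.val < n p.1 q.1 with hadj'
  haveI : DecidableRel adj' := fun p q => Nat.decLt _ _
  have hirr' : ∀ p, ¬ adj' p p := by
    intro p h
    have : n p.1 p.1 = 0 := hz _ _ (hirr p.1)
    simp only [hadj', this] at h
    omega
  have hasym' : ∀ p q, adj' p q → ¬ adj' q p := by
    intro p q h1 h2
    simp only [hadj'] at h1 h2
    exact hasym p.1 q.1 (hadj _ _ (by omega)) (hadj _ _ (by omega))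
  obtain ⟨⟨v, i⟩, hvi⟩ := H (V × Fin M) adj' ⟨(hne.some, ⟨0, Nat.succ_pos _⟩)⟩ hirr' hasym'
  refine ⟨v, ?_⟩
  have hA : (firstNbhd adj' (v, i)).card = ∑ s : V, n v s := by
    rw [firstNbhd, card_filter_prod (fun q : V × Fin M => adj' (v, i) q)]
    refine Finset.sum_congr rfl fun s _ => ?_
    have e1 : Finset.filter (fun j : Fin M => adj' (v, i) (s, j)) Finset.univ
        = Finset.filter (fun j : Fin M => (j : ℕ) < n v s) Finset.univ :=
      Finset.filter_congr fun j _ => by simp [hadj']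
    rw [e1, card_filter_fin M (fun m => m < n v s)]
    have e2 : (Finset.range M).filter (fun m => m < n v s) = Finset.range (n v s) := by
      ext x
      simp only [Finset.mem_filter, Finset.mem_range]
      have := hM v s
      omega
    rw [e2, Finset.card_range]
  have hC : alphaW adj (fun a b => (n a b : ℝ)) v = ∑ s : V, (n v s : ℝ) := by
    rw [alphaW, firstNbhd]
    apply Finset.sum_subset (Finset.filter_subset _ _)
    intro x _ hx
    simp only [Finset.mem_filter, Finset.mem_univ, true_and] at hx
    rw [hz v x hx, Nat.cast_zero]
  have hB : ((secondNbhd adj' (v, i)).card : ℝ) ≤ betaW adj (fun a b => (n a b : ℝ)) v := by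
    rw [secondNbhd, card_filter_prod (fun q : V × Fin M =>
      q ≠ (v, i) ∧ ¬ adj' (v, i) q ∧ ∃ x, adj' (v, i) x ∧ adj' x q), betaW]
    push_cast
    apply Finset.sum_le_sum
    intro s _
    set K : ℕ := (Finset.univ.filter fun u : V => 0 < n v u).sup (fun u => n u s) with hK
    have hKM : K ≤ M := Finset.sup_le fun u _ => (hM u s).le
    have hsub : (Finset.univ.filter fun j : Fin M =>
        ((s, j) ≠ (v, i) ∧ ¬ adj' (v, i) (s, j) ∧ ∃ x, adj' (v, i) x ∧ adj' x (s, j)))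
        ⊆ Finset.univ.filter fun j : Fin M => n v s ≤ j.val ∧ j.val < K := by
      intro j hj
      simp only [Finset.mem_filter, Finset.mem_univ, true_and] at hj ⊢
      obtain ⟨-, h2, ⟨x, hx1, hx2⟩⟩ := hj
      simp only [hadj'] at h2 hx1 hx2
      have h2' : ¬ ((j : ℕ) < n v s) := h2
      have hx1' : (x.2 : ℕ) < n v x.1 := hx1
      have hx2' : (j : ℕ) < n x.1 s := hx2
      have hmemx : x.1 ∈ Finset.filter (fun u : V => 0 < n v u) Finset.univ :=
        Finset.mem_filter.mpr ⟨Finset.mem_univ _, by omega⟩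
      refine ⟨by omega, ?_⟩
      calc (j : ℕ) < n x.1 s := hx2'
        _ ≤ K := by rw [hK]; exact Finset.le_sup (f := fun u => n u s) hmemx
    have hcount : (Finset.univ.filter fun j : Fin M => n v s ≤ j.val ∧ j.val < K).card
        = K - n v s := by
      rw [card_filter_fin M (fun m => n v s ≤ m ∧ m < K)]
      have e3 : (Finset.range M).filter (fun m => n v s ≤ m ∧ m < K) = Finset.Ico (n v s) K := by
        ext x
        simp only [Finset.mem_filter, Finset.mem_range, Finset.mem_Ico]
        omega
      rw [e3, Nat.card_Ico]
    calc ((Finset.univ.filter fun j : Fin M =>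
          ((s, j) ≠ (v, i) ∧ ¬ adj' (v, i) (s, j) ∧ ∃ x, adj' (v, i) x ∧ adj' x (s, j))).card : ℝ)
        ≤ (((Finset.univ.filter fun j : Fin M => n v s ≤ j.val ∧ j.val < K).card : ℕ) : ℝ) := by
          exact_mod_cast Finset.card_le_card hsub
      _ = ((K - n v s : ℕ) : ℝ) := by rw [hcount]
      _ ≤ betaS adj (fun a b => (n a b : ℝ)) v s := by
          rcases le_or_gt K (n v s) with h | h
          · rw [Nat.sub_eq_zero_of_le h, Nat.cast_zero]
            exact betaS_nonneg adj _ v s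
          · have hne2 : (Finset.univ.filter fun u : V => 0 < n v u).Nonempty := by
              by_contra hc
              rw [Finset.not_nonempty_iff_eq_empty] at hc
              rw [hK, hc, Finset.sup_empty] at h
              rw [Nat.bot_eq_zero] at h
              omega
            obtain ⟨u, hu, hus⟩ := Finset.exists_mem_eq_sup _ hne2 (fun u => n u s)
            rw [← hK] at hus
            have hvu : adj v u := hadj _ _ ((Finset.mem_filter.mp hu).2)
            have hus2 : adj u s := hadj _ _ (by omega)
            have hle := le_betaS adj (fun a b => (n a b : ℝ)) hvu hus2
            rw [Nat.cast_sub h.le, hus]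
            exact hle
  rw [deltaW, hC]
  have e4 : (∑ s : V, (n v s : ℝ)) = ((firstNbhd adj' (v, i)).card : ℝ) := by
    rw [hA]
    push_cast
    rfl
  have e5 : ((firstNbhd adj' (v, i)).card : ℝ) ≤ ((secondNbhd adj' (v, i)).card : ℝ) :=
    Nat.cast_le.mpr hvi
  linarith


/-- The second neighborhood conjecture is equivalent to its arc-weighted version:
(i) every (nonempty, loopless, 2-cycle-free) digraph has a vertex `v` with
`|N1+(v)| ≤ |N2+(v)|` if and only if
(ii) for every such digraph with a nonnegative arc-weighting `w` (zero on non-arcs),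
there is a vertex `v` with `δ_v ≥ 0`. -/
theorem second_neighborhood_iff_arc_weighted :
    (∀ (V : Type) [Fintype V] [DecidableEq V] (adj : V → V → Prop) [DecidableRel adj],
        Nonempty V →
        (∀ v, ¬ adj v v) →
        (∀ u v, adj u v → ¬ adj v u) →
        ∃ v : V, (firstNbhd adj v).card ≤ (secondNbhd adj v).card)
    ↔
    (∀ (V : Type) [Fintype V] [DecidableEq V] (adj : V → V → Prop) [DecidableRel adj],
        Nonempty V →
        (∀ v, ¬ adj v v) →
        (∀ u v, adj u v → ¬ adj v u) →
        ∀ w : V → V → ℝ,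
          (∀ a b, 0 ≤ w a b) →
          (∀ a b, ¬ adj a b → w a b = 0) →
          ∃ v : V, 0 ≤ deltaW adj w v) := by
  constructor
  · -- the hard direction: unweighted implies weighted
    intro H V _ _ adj _ hne hirr hasym w hw0 hwz
    by_contra hcon
    push_neg at hcon
    obtain ⟨v0⟩ := hne
    set ε : ℝ := (Finset.univ : Finset V).inf' ⟨v0, Finset.mem_univ v0⟩
      (fun v => -(deltaW adj w v)) with hε'
    have hε : 0 < ε := by
      rw [hε']
      refine (Finset.lt_inf'_iff _).mpr ?_
      intro v _
      linarith [hcon v]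
    have hcard : (0:ℝ) < Fintype.card V := by
      have : 0 < Fintype.card V := Fintype.card_pos_iff.mpr ⟨v0⟩
      exact_mod_cast this
    obtain ⟨q, hq⟩ := exists_nat_gt (2 * (Fintype.card V) / ε)
    have hq0 : (0:ℝ) < q := lt_of_le_of_lt (by positivity) hq
    set n : V → V → ℕ := fun a b => ⌊(q : ℝ) * w a b⌋₊ with hn
    have hzn : ∀ a b, ¬ adj a b → n a b = 0 := by
      intro a b hab
      show ⌊(q : ℝ) * w a b⌋₊ = 0
      simp [hwz a b hab]
    obtain ⟨v, hv⟩ := intCase H V adj ⟨v0⟩ hirr hasym n hzn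
    set w' : V → V → ℝ := fun a b => (1 / q) * (n a b : ℝ) with hw'
    have hv' : 0 ≤ deltaW adj w' v := by
      have heq : deltaW adj w' v
          = (1 / (q:ℝ)) * deltaW adj (fun a b => (n a b : ℝ)) v :=
        deltaW_smul adj (fun a b => (n a b : ℝ)) (one_div_nonneg.mpr hq0.le) v
      rw [heq]
      exact mul_nonneg (one_div_nonneg.mpr hq0.le) hv
    have h1 : ∀ a b, w' a b ≤ w a b := by
      intro a b
      show 1 / (q:ℝ) * (n a b : ℝ) ≤ w a b
      have h0 : (0:ℝ) ≤ (q:ℝ) * w a b := mul_nonneg hq0.le (hw0 a b)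
      have hfl : ((n a b : ℕ) : ℝ) ≤ (q:ℝ) * w a b := Nat.floor_le h0
      rw [div_mul_eq_mul_div, one_mul, div_le_iff₀ hq0]
      calc ((n a b : ℕ) : ℝ) ≤ (q:ℝ) * w a b := hfl
        _ = w a b * q := mul_comm _ _
    have h2 : ∀ a b, w a b ≤ w' a b + 1 / q := by
      intro a b
      show w a b ≤ 1 / (q:ℝ) * (n a b : ℝ) + 1 / q
      have hlt : (q : ℝ) * w a b < ((n a b : ℕ) : ℝ) + 1 :=
        Nat.lt_floor_add_one ((q : ℝ) * w a b)
      have hle : w a b ≤ (((n a b : ℕ) : ℝ) + 1) / q := by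
        rw [le_div_iff₀ hq0]
        nlinarith [hlt]
      calc w a b ≤ (((n a b : ℕ) : ℝ) + 1) / q := hle
        _ = 1 / (q:ℝ) * (n a b : ℝ) + 1 / q := by ring
    have hcomp := deltaW_compare adj w w'
      (one_div_nonneg.mpr hq0.le) h1 h2 v
    have hεle : ε ≤ -(deltaW adj w v) := by
      rw [hε']
      exact Finset.inf'_le _ (Finset.mem_univ v)
    have hqε : 2 * (Fintype.card V) * (1 / q) < ε := by
      rw [mul_one_div, div_lt_iff₀ hq0]
      have := (div_lt_iff₀ hε).mp hq
      linarith [mul_comm ε (q:ℝ)]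
    linarith
  · -- the easy direction: weighted implies unweighted
    intro H V _ _ adj _ hne hirr hasym
    set w : V → V → ℝ := fun a b => if adj a b then 1 else 0 with hw
    have hw0 : ∀ a b, 0 ≤ w a b := by
      intro a b
      show (0:ℝ) ≤ if adj a b then 1 else 0
      split <;> norm_num
    have hwz : ∀ a b, ¬ adj a b → w a b = 0 := by
      intro a b hab
      show (if adj a b then (1:ℝ) else 0) = 0
      simp [hab]
    have hwone : ∀ a b, adj a b → w a b = 1 := by
      intro a b hab
      show (if adj a b then (1:ℝ) else 0) = 1
      simp [hab]
    obtain ⟨v, hv⟩ := H V adj hne hirr hasym w hw0 hwz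
    refine ⟨v, ?_⟩
    have hα : alphaW adj w v = (firstNbhd adj v).card := by
      rw [alphaW]
      have hone : ∀ u ∈ firstNbhd adj v, w v u = 1 := by
        intro u hu
        exact hwone v u (by simpa [firstNbhd] using hu)
      rw [Finset.sum_congr rfl hone, Finset.sum_const, nsmul_eq_mul, mul_one]
    have hβ : betaW adj w v ≤ (secondNbhd adj v).card := by
      rw [betaW]
      calc (∑ s : V, betaS adj w v s)
          ≤ ∑ s : V, (if s ∈ secondNbhd adj v then (1:ℝ) else 0) := by
            apply Finset.sum_le_sum
            intro s _
            apply betaS_le adj w (by split <;> norm_num)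
            intro u hvu hus
            by_cases hmem : s ∈ secondNbhd adj v
            · simp only [hmem, if_pos]
              have := hw0 v s
              have h1 : w u s = 1 := hwone u s hus
              linarith
            · simp only [secondNbhd, Finset.mem_filter, Finset.mem_univ, true_and,
                not_and, not_exists] at hmem
              by_cases hsv : s = v
              · exact absurd (hsv ▸ hus) (hasym v u hvu)
              · have hvs : adj v s := by
                  by_contra hvs
                  exact (hmem hsv hvs) u hvu hus
                have h1 : w u s = 1 := hwone u s hus
                have h2 : w v s = 1 := hwone v s hvs
                simp only [h1, h2, sub_self]
                split <;> norm_num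
        _ = ((secondNbhd adj v).card : ℝ) := by
            rw [Finset.sum_ite_mem, Finset.univ_inter, Finset.sum_const, nsmul_eq_mul, mul_one]
    have hfin : ((firstNbhd adj v).card : ℝ) ≤ ((secondNbhd adj v).card : ℝ) := by
      rw [deltaW] at hv
      linarith
    exact_mod_cast hfin
end

section
/- Let D be a digraph with arc-weighting w such that every vertex of D is strongly contracting (δ_v < 0 for all v). Let η* be a nonnegative vertex-weighting of D such that η*(N1+(v)) ≤ η*(N2+(v)) for every vertex v. Assume that for every vertex v and every s ∈ N2+(v) there exists u ∈ N1+(v) with u → s and w(us) > 0. Let ε > 0 satisfy ε·η*(y) ≤ w(xy) for every arc x → y with w(xy) > 0, and define a new arc-weighting w* by w*(xy) = w(xy) − ε·η*(y) if w(xy) > 0 and w*(xy) = 0 if w(xy) = 0. Then w* is a nonnegative arc-weighting under which every vertex of D is still strongly contracting. -/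
open Finset

/-- Let `D` be an arc-weighted digraph in which every vertex is strongly contracting
(`δ_v < 0` for all `v`), and let `η*` be a nonnegative vertex-weighting with
`η*(N1+(v)) ≤ η*(N2+(v))` for all `v`.  Assume that for every vertex `v` and every
`s ∈ N2+(v)` there is a `u ∈ N1+(v)` with `u → s` and `w(us) > 0`.  If `ε > 0` satisfies
`ε·η*(y) ≤ w(xy)` for every arc `x → y` of positive weight, then the new arc-weighting
`w*(xy) = w(xy) − ε·η*(y)` on positive-weight arcs (and `0` elsewhere) is a nonnegative
arc-weighting under which every vertex is still strongly contracting. -/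
theorem perturbed_weighting_still_contracting
    {V : Type*} [Fintype V] [DecidableEq V]
    (adj : V → V → Prop) [DecidableRel adj]
    (hirr : ∀ a, ¬ adj a a)
    (hasym : ∀ a b, adj a b → ¬ adj b a)
    (w : V → V → ℝ)
    (hw_nonneg : ∀ a b, 0 ≤ w a b)
    (hw_arc : ∀ a b, ¬ adj a b → w a b = 0)
    (hcontr : ∀ v : V, deltaW adj w v < 0)
    (η : V → ℝ) (hη_nonneg : ∀ v, 0 ≤ η v)
    (hη_exp : ∀ v : V, ∑ s ∈ firstNbhd adj v, η s ≤ ∑ s ∈ secondNbhd adj v, η s)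
    (hfull : ∀ v : V, ∀ s ∈ secondNbhd adj v,
        ∃ u ∈ firstNbhd adj v, adj u s ∧ 0 < w u s)
    (ε : ℝ) (hε : 0 < ε)
    (hε_small : ∀ x y, adj x y → 0 < w x y → ε * η y ≤ w x y)
    (w' : V → V → ℝ)
    (hw' : ∀ x y, w' x y = if 0 < w x y then w x y - ε * η y else 0) :
    (∀ a b, 0 ≤ w' a b) ∧ (∀ a b, ¬ adj a b → w' a b = 0) ∧
      ∀ v : V, deltaW adj w' v < 0 := by
  have hadj_pos : ∀ a b, 0 < w a b → adj a b := by
    intro a b h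
    by_contra hn
    rw [hw_arc a b hn] at h
    exact lt_irrefl _ h
  have hnn : ∀ a b, 0 ≤ w' a b := by
    intro a b
    rw [hw' a b]
    split_ifs with h
    · linarith [hε_small a b (hadj_pos a b h) h]
    · exact le_refl 0
  have harc : ∀ a b, ¬ adj a b → w' a b = 0 := by
    intro a b h
    rw [hw' a b, hw_arc a b h]
    simp
  refine ⟨hnn, harc, ?_⟩
  intro v
  have hb0 : ∀ s, 0 ≤ betaS adj w v s := fun s =>
    Finset.le_max' _ 0 (Finset.mem_insert_self 0 _)
  have hbelem : ∀ u s, adj v u → adj u s → w u s - w v s ≤ betaS adj w v s := by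
    intro u s hvu hus
    have hmem : u ∈ Finset.univ.filter (fun u => adj v u ∧ adj u s) := by
      simp [hvu, hus]
    exact Finset.le_max' _ _ (Finset.mem_insert_of_mem (Finset.mem_image_of_mem (fun u => w u s - w v s) hmem))
  have hεη : ∀ s, 0 ≤ ε * η s := fun s => mul_nonneg hε.le (hη_nonneg s)
  have hwz : ∀ a b, ¬ 0 < w a b → w a b = 0 := fun a b h =>
    le_antisymm (not_lt.mp h) (hw_nonneg a b)
  -- key pointwise bound on betaS
  have key : ∀ s, betaS adj w' v s ≤
      betaS adj w v s - (if s ∈ secondNbhd adj v then ε * η s else 0) := by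
    intro s
    by_cases hs : s ∈ secondNbhd adj v
    · simp only [hs, if_pos]
      obtain ⟨u0, hu0, hu0s, hu0pos⟩ := hfull v s hs
      have hvu0 : adj v u0 := (Finset.mem_filter.mp hu0).2
      have hnvs : ¬ adj v s := ((Finset.mem_filter.mp hs).2).2.1
      have hwvs : w v s = 0 := hw_arc v s hnvs
      have hεw : ε * η s ≤ w u0 s := hε_small u0 s hu0s hu0pos
      have hβlb : ε * η s ≤ betaS adj w v s := by
        have := hbelem u0 s hvu0 hu0s
        linarith
      apply Finset.max'_le
      intro y hy
      rcases Finset.mem_insert.mp hy with h0 | hmem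
      · subst h0; linarith
      · obtain ⟨u, hu, rfl⟩ := Finset.mem_image.mp hmem
        obtain ⟨hvu, hus⟩ := (Finset.mem_filter.mp hu).2
        have hvs' : w' v s = 0 := harc v s hnvs
        have hb := hbelem u s hvu hus
        rw [hvs', hw' u s]
        split_ifs with h1
        · linarith
        · linarith
    · simp only [hs, if_neg, not_false_iff, sub_zero]
      apply Finset.max'_le
      intro y hy
      rcases Finset.mem_insert.mp hy with h0 | hmem
      · subst h0; exact hb0 s
      · obtain ⟨u, hu, rfl⟩ := Finset.mem_image.mp hmem
        obtain ⟨hvu, hus⟩ := (Finset.mem_filter.mp hu).2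
        have hb := hbelem u s hvu hus
        rw [hw' u s, hw' v s]
        split_ifs with h1 h2 h2
        · linarith
        · have := hwz v s h2
          linarith [hεη s]
        · have := hε_small v s (hadj_pos v s h2) h2
          linarith [hb0 s]
        · linarith [hb0 s]
  -- bound on betaW
  have hβ : betaW adj w' v ≤ betaW adj w v - ε * ∑ s ∈ secondNbhd adj v, η s := by
    have h1 : betaW adj w' v ≤
        ∑ s, (betaS adj w v s - (if s ∈ secondNbhd adj v then ε * η s else 0)) :=
      Finset.sum_le_sum (fun s _ => key s)
    have h2 : ∑ s, (betaS adj w v s - (if s ∈ secondNbhd adj v then ε * η s else 0))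
        = betaW adj w v - ∑ s ∈ secondNbhd adj v, ε * η s := by
      rw [Finset.sum_sub_distrib]
      congr 1
      rw [Finset.sum_ite_mem, Finset.univ_inter]
    rw [h2] at h1
    rwa [Finset.mul_sum]
  -- bound on alphaW
  have hα : alphaW adj w v - ε * ∑ s ∈ firstNbhd adj v, η s ≤ alphaW adj w' v := by
    unfold alphaW
    rw [Finset.mul_sum, ← Finset.sum_sub_distrib]
    apply Finset.sum_le_sum
    intro u _
    rw [hw' v u]
    split_ifs with h
    · exact le_refl _
    · have := hwz v u h
      linarith [hεη u]
  have hδ := hcontr v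
  unfold deltaW at hδ ⊢
  have hηe := hη_exp v
  nlinarith [hβ, hα, hδ, hηe, hε]
end
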